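/- arXiv:1705.00719 — 15 statements merged into one kernel-verified Lean document; each statement's English description precedes it below -/
import Mathlib

section
/- Any quasitrivial operation F : X^n → X has at most one isolated point. -/
/-- `F` is quasitrivial: it always outputs one of its arguments. -/
def Quasitrivial {X : Type*} {n : ℕ} (F : (Fin n → X) → X) : Prop :=
  ∀ x : Fin n → X, ∃ i, F x = x i

/-- `F` is symmetric: invariant under permutation of its arguments. -/
def Symm {X : Type*} {n : ℕ} (F : (Fin n → X) → X) : Prop :=
  ∀ (x : Fin n → X) (σ : Equiv.Perm (Fin n)), F (x ∘ σ) = F x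

/-- `F` is nondecreasing in each argument. -/
def Nondecr {X : Type*} [LinearOrder X] {n : ℕ} (F : (Fin n → X) → X) : Prop :=
  ∀ x y : Fin n → X, (∀ i, x i ≤ y i) → F x ≤ F y

/-- `x` is an isolated point for `F`. -/
def Isolated {X : Type*} {n : ℕ} (F : (Fin n → X) → X) (x : Fin n → X) : Prop :=
  ∀ y : Fin n → X, F y = F x → y = x

/-- `e` is a neutral element of the `n`-ary operation `F`. -/
def Neutral {X : Type*} {n : ℕ} (F : (Fin n → X) → X) (e : X) : Prop :=
  ∀ (i : Fin n) (x : X), F (Function.update (fun _ => e) i x) = x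

/-- `n`-ary associativity: substituting `F` over the block of `n` consecutive
arguments starting at position `i` (0-based) of a `(2n-1)`-tuple gives the same
result as substituting over the block starting at position `i+1`. -/
def NAssoc {X : Type*} (n : ℕ) (F : (Fin n → X) → X) : Prop :=
  ∀ (x : ℕ → X) (i : ℕ), i + 2 ≤ n →
    F (fun j : Fin n => if (j : ℕ) < i then x j
        else if (j : ℕ) = i then F (fun k : Fin n => x (i + k)) else x (j + n - 1))
    = F (fun j : Fin n => if (j : ℕ) < i + 1 then x j
        else if (j : ℕ) = i + 1 then F (fun k : Fin n => x (i + 1 + k)) else x (j + n - 1))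

/-- `F` is bisymmetric. -/
def Bisymm {X : Type*} {n : ℕ} (F : (Fin n → X) → X) : Prop :=
  ∀ M : Fin n → Fin n → X,
    F (fun i => F (M i)) = F (fun j => F (fun i => M i j))

/-- `F` is ultrabisymmetric: the value `F (F ∘ rows)` is unchanged when two
entries of the matrix are exchanged. -/
def UltraBisymm {X : Type*} {n : ℕ} (F : (Fin n → X) → X) : Prop :=
  ∀ (M : Fin n → Fin n → X) (p q : Fin n × Fin n),
    F (fun i => F (M i)) =
    F (fun i => F (fun j =>
      if (i, j) = p then M q.1 q.2 else if (i, j) = q then M p.1 p.2 else M i j))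

/-- Iterated left composition `x 0 ∘ x 1 ∘ ⋯ ∘ x k` for a binary operation. -/
def iterComp {X : Type*} (H : X → X → X) (x : ℕ → X) : ℕ → X
  | 0 => x 0
  | k + 1 => H (iterComp H x k) (x (k + 1))

/-- The `n`-ary operation `F` is derived from the binary operation `H`. -/
def DerivedFrom {X : Type*} {n : ℕ} (F : (Fin n → X) → X) (H : X → X → X) : Prop :=
  ∀ x : ℕ → X, F (fun i : Fin n => x i) = iterComp H x (n - 1)

theorem stmt_1 {X : Type*} {n : ℕ} (hn : 2 ≤ n) (F : (Fin n → X) → X)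
    (hq : Quasitrivial F) (x y : Fin n → X)
    (hx : Isolated F x) (hy : Isolated F y) : x = y := by
  -- Every isolated point is constant
  have hconst : ∀ z : Fin n → X, Isolated F z → z = fun _ => F z := by
    intro z hz
    obtain ⟨i, hi⟩ := hq z
    obtain ⟨j, hj⟩ := hq (fun _ => z i)
    have : (fun _ => z i : Fin n → X) = z := hz _ (by rw [hj, hi])
    rw [hi, this]
  have hxc := hconst x hx
  have hyc := hconst y hy
  set a := F x with ha
  set b := F y with hb
  by_cases hab : a = b
  · rw [hxc, hyc, hab]
  · exfalso
    set w : Fin n → X := fun j => if (j : ℕ) = 0 then a else b with hw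
    obtain ⟨k, hk⟩ := hq w
    by_cases hk0 : (k : ℕ) = 0
    · have hFw : F w = a := by rw [hk]; simp [hw, hk0]
      have hwx : w = x := hx w (by rw [hFw, ← ha])
      have h1 : w ⟨1, by omega⟩ = x ⟨1, by omega⟩ := by rw [hwx]
      rw [hxc] at h1
      simp [hw] at h1
      exact hab h1.symm
    · have hFw : F w = b := by rw [hk]; simp [hw, hk0]
      have hwy : w = y := hy w (by rw [hFw, ← hb])
      have h0 : w ⟨0, by omega⟩ = y ⟨0, by omega⟩ := by rw [hwy]
      rw [hyc] at h0
      simp [hw] at h0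
      exact hab h0
end

section
/- Let F : X^n → X be quasitrivial and let e ∈ X. If the point (e,...,e) (e repeated n times) is isolated for F, then e is a neutral element of F. -/
theorem stmt_2 {X : Type*} {n : ℕ} (hn : 2 ≤ n) (F : (Fin n → X) → X)
    (hq : Quasitrivial F) (e : X)
    (he : Isolated F (fun _ => e)) : Neutral F e := by
  have hce : F (fun _ => e) = e := by
    obtain ⟨j, hj⟩ := hq (fun _ => e); exact hj
  intro i x
  set y := Function.update (fun _ : Fin n => e) i x with hy
  obtain ⟨j, hj⟩ := hq y
  by_cases hji : j = i
  · simpa [hy, hji] using hj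
  · have hyj : y j = e := by simp [hy, Function.update_of_ne hji]
    have hFy : F y = e := hj.trans hyj
    have := he y (hFy.trans hce.symm)
    have hx : x = e := by
      have := congrFun this i; simpa [hy] using this
    rw [hFy, hx]
end

section
/- Let X be a linearly ordered set. If G : X² → X is quasitrivial, symmetric, and nondecreasing in each argument, then G is associative. -/
theorem stmt_4 {X : Type*} [LinearOrder X] (G : X → X → X)
    (hq : ∀ x y, G x y = x ∨ G x y = y)
    (hs : ∀ x y, G x y = G y x)
    (hm : ∀ x x' y y', x ≤ x' → y ≤ y' → G x y ≤ G x' y') :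
    ∀ x y z, G (G x y) z = G x (G y z) := by
  -- transitivity of the relation `G a b = b`
  have trans : ∀ a b c, G a b = b → G b c = c → G a c = c := by
    intro a b c hab hbc
    rcases hq a c with h | h
    · rcases le_total a c with hac | hca
      · rcases le_total b a with hba | hab' 
        · have hcb : G b c ≤ G a c := hm b a c c hba le_rfl
          rw [hbc, h] at hcb
          rw [h]; exact le_antisymm hac hcb
        · rcases le_total b c with hbc' | hcb
          · have h1 : G a b ≤ G a c := hm a a b c le_rfl hbc'
            rw [hab, h] at h1
            have hba : b = a := le_antisymm h1 hab'
            rw [← hba]; exact hbc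
          · have h1 : G a b ≤ G c b := hm a c b b hac le_rfl
            rw [hab, hs c b, hbc] at h1
            have hbc2 : b = c := le_antisymm h1 hcb
            rw [← hbc2]; exact hab
      · rcases le_total b c with hbc' | hcb
        · have h1 : G b c ≤ G b a := hm b b c a le_rfl hca
          rw [hbc, hs b a, hab] at h1
          have hbc2 : c = b := le_antisymm h1 hbc'
          rw [hbc2]; exact hab
        · rcases le_total a b with hab' | hba'
          · have h1 : G a c ≤ G b c := hm a b c c hab' le_rfl
            rw [h, hbc] at h1
            rw [h]; exact le_antisymm h1 hca
          · have h1 : G a c ≤ G a b := hm a a c b le_rfl hcb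
            rw [h, hab] at h1
            have hab2 : a = b := le_antisymm h1 hba'
            rw [hab2]; exact hbc
    · exact h
  intro x y z
  rcases hq x y with hxy | hxy
  · rcases hq y z with hyz | hyz
    · rw [hxy, hyz, hxy]
      have h1 : G z y = y := (hs z y).trans hyz
      have h2 : G y x = x := (hs y x).trans hxy
      have h3 : G z x = x := trans z y x h1 h2
      exact (hs x z).trans h3
    · rw [hxy, hyz]
  · rcases hq y z with hyz | hyz
    · rw [hxy, hyz]
      exact hxy.symm
    · rw [hxy, hyz, trans x y z hxy hyz]
end

section
/- Let X be a linearly ordered set, n ≥ 3, and let F : X^n → X be quasitrivial, symmetric, nondecreasing, and associative. Then F(x,...,x,y) = F(x,y,...,y) (with n−1 copies of x on the left, n−1 copies of y on the right) for all x,y ∈ X. -/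
theorem stmt_5 {X : Type*} [LinearOrder X] {n : ℕ} (hn : 3 ≤ n)
    (F : (Fin n → X) → X) (hq : Quasitrivial F) (hs : Symm F)
    (hm : Nondecr F) (ha : NAssoc n F) :
    ∀ x y : X,
      F (fun i => if (i : ℕ) < n - 1 then x else y)
        = F (fun i => if (i : ℕ) = 0 then x else y) := by
  intro x y
  -- membership of the two values in {x, y}
  have hAmem : F (fun i : Fin n => if (i : ℕ) < n - 1 then x else y) = x ∨
      F (fun i : Fin n => if (i : ℕ) < n - 1 then x else y) = y := by
    obtain ⟨i, hi⟩ := hq (fun i : Fin n => if (i : ℕ) < n - 1 then x else y)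
    by_cases h : (i : ℕ) < n - 1
    · left; rw [hi]; simp [h]
    · right; rw [hi]; simp [h]
  have hBmem : F (fun i : Fin n => if (i : ℕ) = 0 then x else y) = x ∨
      F (fun i : Fin n => if (i : ℕ) = 0 then x else y) = y := by
    obtain ⟨i, hi⟩ := hq (fun i : Fin n => if (i : ℕ) = 0 then x else y)
    by_cases h : (i : ℕ) = 0
    · left; rw [hi]; simp [h]
    · right; rw [hi]; simp [h]
  have hFy : F (fun _ : Fin n => y) = y := by
    obtain ⟨i, hi⟩ := hq (fun _ : Fin n => y); exact hi
  -- the key associativity identity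
  have hstar : F (fun i : Fin n => if (i : ℕ) = 0 then
        F (fun i : Fin n => if (i : ℕ) < n - 1 then x else y) else y)
      = F (fun i : Fin n => if (i : ℕ) < n - 1 then x else y) := by
    set t : ℕ → X := fun k => if k < n - 1 then x else y with ht
    have chain : ∀ m : ℕ, m ≤ n - 1 →
        F (fun j : Fin n => if (j : ℕ) < 0 then t j
            else if (j : ℕ) = 0 then F (fun k : Fin n => t (0 + k)) else t (j + n - 1))
        = F (fun j : Fin n => if (j : ℕ) < m then t j
            else if (j : ℕ) = m then F (fun k : Fin n => t (m + k)) else t (j + n - 1)) := by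
      intro m
      induction m with
      | zero => intro _; rfl
      | succ m ih =>
        intro hm
        exact (ih (by omega)).trans (ha t m (by omega))
    have hc := chain (n - 1) le_rfl
    have hL : (fun j : Fin n => if (j : ℕ) < 0 then t j
          else if (j : ℕ) = 0 then F (fun k : Fin n => t (0 + k)) else t (j + n - 1))
        = (fun i : Fin n => if (i : ℕ) = 0 then
            F (fun i : Fin n => if (i : ℕ) < n - 1 then x else y) else y) := by
      funext j
      have h0 : ¬ ((j : ℕ) < 0) := Nat.not_lt_zero _
      simp only [h0, if_false]
      by_cases hj : (j : ℕ) = 0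
      · simp only [hj, if_true]
        congr 1
        funext k
        simp only [ht, Nat.zero_add]
      · simp only [hj, if_false]
        have hge : ¬ ((j : ℕ) + n - 1 < n - 1) := by omega
        simp only [ht, hge, if_false]
    have hR : (fun j : Fin n => if (j : ℕ) < n - 1 then t j
          else if (j : ℕ) = n - 1 then F (fun k : Fin n => t (n - 1 + k)) else t (j + n - 1))
        = (fun i : Fin n => if (i : ℕ) < n - 1 then x else y) := by
      funext j
      by_cases hlt : (j : ℕ) < n - 1
      · simp only [hlt, if_true, ht]
      · have hj : (j : ℕ) = n - 1 := by have := j.isLt; omega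
        simp only [hlt, if_false, hj, if_true]
        have hconst : (fun k : Fin n => t (n - 1 + (k : ℕ))) = fun _ => y := by
          funext k
          have : ¬ (n - 1 + (k : ℕ) < n - 1) := by omega
          simp only [ht, this, if_false]
        rw [hconst, hFy]
        simp
    rw [hL, hR] at hc
    exact hc
  rcases hAmem with hAx | hAy
  · rw [hAx] at hstar ⊢
    exact hstar.symm
  · rcases hBmem with hBx | hBy
    · -- A = y, B = x : monotonicity forces x = y
      have hxy : x = y := by
        rcases le_total x y with h | h
        · have hle := hm (fun i : Fin n => if (i : ℕ) < n - 1 then x else y)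
            (fun i : Fin n => if (i : ℕ) = 0 then x else y) (by
              intro k
              by_cases h2 : (k : ℕ) = 0
              · have h1 : (k : ℕ) < n - 1 := by omega
                simp only [if_pos h1, if_pos h2]
                exact le_refl x
              · by_cases h1 : (k : ℕ) < n - 1
                · simp only [if_pos h1, if_neg h2]; exact h
                · simp [h1, h2])
          rw [hAy, hBx] at hle
          exact le_antisymm h hle
        · have hle := hm (fun i : Fin n => if (i : ℕ) = 0 then x else y)
            (fun i : Fin n => if (i : ℕ) < n - 1 then x else y) (by
              intro k
              by_cases h1 : (k : ℕ) = 0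
              · have h2 : (k : ℕ) < n - 1 := by omega
                simp only [if_pos h1, if_pos h2]
                exact le_refl x
              · by_cases h2 : (k : ℕ) < n - 1
                · simp only [if_neg h1, if_pos h2]; exact h
                · simp [h1, h2])
          rw [hAy, hBx] at hle
          exact le_antisymm hle h
      rw [hAy, hBx, hxy]
    · rw [hAy, hBy]
end

section
/- Let X be a linearly ordered set, n ≥ 3, and let F : X^n → X be quasitrivial, symmetric, and nondecreasing. If F(x,...,x,y) = F(x,y,...,y) for all x,y ∈ X (with n−1 copies of the repeated element), then there exists a quasitrivial nondecreasing operation G : X² → X such that F(x_1,...,x_n) = G(min_i x_i, max_i x_i) for all x_1,...,x_n ∈ X. -/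
theorem stmt_6 {X : Type*} [LinearOrder X] {n : ℕ} (hn : 3 ≤ n)
    (F : (Fin n → X) → X) (hq : Quasitrivial F) (hs : Symm F) (hm : Nondecr F)
    (h2 : ∀ x y : X,
      F (fun i => if (i : ℕ) < n - 1 then x else y)
        = F (fun i => if (i : ℕ) = 0 then x else y)) :
    ∃ G : X → X → X,
      (∀ x y, G x y = x ∨ G x y = y) ∧
      (∀ x x' y y', x ≤ x' → y ≤ y' → G x y ≤ G x' y') ∧
      ∀ x : Fin n → X,
        F x = G (Finset.univ.inf' (Finset.univ_nonempty_iff.mpr ⟨⟨0, by omega⟩⟩) x)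
                (Finset.univ.sup' (Finset.univ_nonempty_iff.mpr ⟨⟨0, by omega⟩⟩) x) := by
  have hn0 : 0 < n := by omega
  set z : Fin n := ⟨0, hn0⟩ with hz
  set m : Fin n := ⟨n - 1, by omega⟩ with hmdef
  set G : X → X → X := fun a b => F (fun i => if (i : ℕ) = 0 then a else b) with hG
  -- lemma A : one `a` among `b`'s at any position gives G a b
  have lemA : ∀ (a b : X) (j : Fin n),
      F (fun i => if i = j then a else b) = G a b := by
    intro a b j
    have hσ : ((fun i => if i = j then a else b) ∘ (Equiv.swap z j))
        = fun i : Fin n => if (i : ℕ) = 0 then a else b := by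
      funext i
      simp only [Function.comp_apply]
      have : Equiv.swap z j i = j ↔ i = z := by
        rw [Equiv.swap_apply_eq_iff, Equiv.swap_apply_right]
      by_cases h : i = z
      · simp [this.mpr h, h, hz]
      · have h' : ¬ (i : ℕ) = 0 := by
          intro hc; exact h (Fin.ext hc)
        simp [this, h, h']
    have := hs (fun i => if i = j then a else b) (Equiv.swap z j)
    rw [hσ] at this
    exact this.symm
  -- lemma B : one `b` among `a`'s at any position gives G a b
  have lemB : ∀ (a b : X) (k : Fin n),
      F (fun i => if i = k then b else a) = G a b := by
    intro a b k
    have hσ : ((fun i => if i = k then b else a) ∘ (Equiv.swap m k))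
        = fun i : Fin n => if i = m then b else a := by
      funext i
      simp only [Function.comp_apply]
      have : Equiv.swap m k i = k ↔ i = m := by
        rw [Equiv.swap_apply_eq_iff, Equiv.swap_apply_right]
      by_cases h : i = m
      · simp [this.mpr h, h]
      · simp [this, h]
    have hswap := hs (fun i => if i = k then b else a) (Equiv.swap m k)
    rw [hσ] at hswap
    have heq : (fun i : Fin n => if i = m then b else a)
        = fun i : Fin n => if (i : ℕ) < n - 1 then a else b := by
      funext i
      have hi := i.isLt
      by_cases h : i = m
      · have : ¬ ((i : ℕ) < n - 1) := by
          rw [h]; exact lt_irrefl _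
        rw [if_pos h, if_neg this]
      · have h' : (i : ℕ) < n - 1 := by
          rcases Nat.lt_or_ge (i : ℕ) (n - 1) with h1 | h1
          · exact h1
          · exact absurd (Fin.ext (by omega : (i : ℕ) = n - 1)) h
        simp [h, h']
    rw [← hswap, heq, h2 a b]
  -- main
  refine ⟨G, ?_, ?_, ?_⟩
  · intro x y
    obtain ⟨i, hi⟩ := hq (fun i : Fin n => if (i : ℕ) = 0 then x else y)
    rw [hG]; dsimp only
    rw [hi]
    split <;> [left; right] <;> rfl
  · intro x x' y y' hx hy
    apply hm
    intro i
    split <;> assumption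
  · intro x
    have ne : (Finset.univ : Finset (Fin n)).Nonempty := ⟨z, Finset.mem_univ z⟩
    show F x = G (Finset.univ.inf' ne x) (Finset.univ.sup' ne x)
    set a := Finset.univ.inf' ne x with ha
    set b := Finset.univ.sup' ne x with hb
    obtain ⟨j, -, hj⟩ := Finset.exists_mem_eq_inf' ne x
    obtain ⟨k, -, hk⟩ := Finset.exists_mem_eq_sup' ne x
    have hub : F x ≤ G a b := by
      rw [← lemA a b j]
      apply hm
      intro i
      split
      · rename_i h; rw [h, ← hj]
      · rw [hb]; exact Finset.le_sup' x (Finset.mem_univ i)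
    have hlb : G a b ≤ F x := by
      rw [← lemB a b k]
      apply hm
      intro i
      split
      · rename_i h; rw [h, ← hk]
      · rw [ha]; exact Finset.inf'_le x (Finset.mem_univ i)
    exact le_antisymm hub hlb
end

section
/- Let X be a linearly ordered set, n ≥ 2, and let G : X² → X be quasitrivial and nondecreasing. Then the operation F : X^n → X defined by F(x_1,...,x_n) = G(min_i x_i, max_i x_i) is associative (in the n-ary sense). -/
section Aux
variable {X : Type*} [LinearOrder X] (G : X → X → X)
    (hq : ∀ x y, G x y = x ∨ G x y = y)
    (hm : ∀ x x' y y', x ≤ x' → y ≤ y' → G x y ≤ G x' y')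

include hq hm in
lemma key_abs (o O a b : X) (hab : a ≤ b) (hoO : o ≤ O) :
    G (min o (G a b)) (max O (G a b)) = G (min o a) (max O b) := by
  have hmM : min o a ≤ max O b := le_trans (min_le_left _ _) (le_trans hoO (le_max_left _ _))
  have hGxx : ∀ z : X, G z z = z := fun z => (hq z z).elim id id
  rcases hq a b with h | h
  · rw [h]
    -- goal: G (min o a) (max O a) = G (min o a) (max O b)
    rcases hq (min o a) (max O b) with h2 | h2
    · -- = min o a
      refine le_antisymm (hm _ _ _ _ le_rfl (max_le_max le_rfl hab)) ?_
      calc G (min o a) (max O b) = min o a := h2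
        _ = G (min o a) (min o a) := (hGxx _).symm
        _ ≤ G (min o a) (max O a) := hm _ _ _ _ le_rfl
            (le_trans (min_le_left _ _) (le_trans hoO (le_max_left _ _)))
    · -- G (min o a) (max O b) = max O b
      have hmax : max O a = max O b := by
        rcases le_total b O with hbO | hOb
        · have : max O a = O := max_eq_left (le_trans hab hbO)
          rw [this, max_eq_left hbO]
        · have hMb : max O b = b := max_eq_right hOb
          have : b ≤ a := by
            have h3 : G (min o a) b ≤ G a b := hm _ _ _ _ (min_le_right _ _) le_rfl
            rw [h] at h3
            calc b = max O b := hMb.symm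
              _ = G (min o a) (max O b) := h2.symm
              _ = G (min o a) b := by rw [hMb]
              _ ≤ a := h3
          have hba : a = b := le_antisymm hab this
          rw [hba]
      rw [hmax]
  · rw [h]
    -- goal: G (min o b) (max O b) = G (min o a) (max O b)
    rcases hq (min o a) (max O b) with h2 | h2
    · -- = min o a ; show min o b = min o a
      have hmin : min o b = min o a := by
        rcases le_total o a with hoa | hao
        · rw [min_eq_left (le_trans hoa hab), min_eq_left hoa]
        · have hma : min o a = a := min_eq_right hao
          have : b ≤ a := by
            have h3 : G a b ≤ G a (max O b) := hm _ _ _ _ le_rfl (le_max_right _ _)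
            rw [h] at h3
            calc b ≤ G a (max O b) := h3
              _ = G (min o a) (max O b) := by rw [hma]
              _ = min o a := h2
              _ = a := hma
          have hba : a = b := le_antisymm hab this
          rw [hba]
      rw [hmin]
    · -- = max O b
      refine le_antisymm ?_ (hm _ _ _ _ (min_le_min le_rfl hab) le_rfl)
      calc G (min o b) (max O b) ≤ G (max O b) (max O b) := hm _ _ _ _
            (le_trans (min_le_left _ _) (le_trans hoO (le_max_left _ _))) le_rfl
        _ = max O b := hGxx _
        _ = G (min o a) (max O b) := h2.symm
end Aux


section Aux2
open Finset
variable {X : Type*} [LinearOrder X] {n : ℕ}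

lemma side_lem (hn : 2 ≤ n) (G : X → X → X)
    (hq : ∀ x y, G x y = x ∨ G x y = y)
    (hm : ∀ x x' y y', x ≤ x' → y ≤ y' → G x y ≤ G x' y')
    (x : ℕ → X) (s : ℕ) (hs : s + 1 ≤ n)
    (hne : (univ : Finset (Fin n)).Nonempty)
    (hR : (Finset.range (2 * n - 1)).Nonempty) :
    G (univ.inf' hne (fun j : Fin n => if (j : ℕ) < s then x j
        else if (j : ℕ) = s then
          G (univ.inf' hne (fun k : Fin n => x (s + k))) (univ.sup' hne (fun k : Fin n => x (s + k)))
        else x (j + n - 1)))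
      (univ.sup' hne (fun j : Fin n => if (j : ℕ) < s then x j
        else if (j : ℕ) = s then
          G (univ.inf' hne (fun k : Fin n => x (s + k))) (univ.sup' hne (fun k : Fin n => x (s + k)))
        else x (j + n - 1)))
    = G ((Finset.range (2 * n - 1)).inf' hR x) ((Finset.range (2 * n - 1)).sup' hR x) := by
  set a := univ.inf' hne (fun k : Fin n => x (s + k)) with ha
  set b := univ.sup' hne (fun k : Fin n => x (s + k)) with hb
  set T : Fin n → X := fun j : Fin n => if (j : ℕ) < s then x j
        else if (j : ℕ) = s then G a b else x (j + n - 1) with hT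
  set is : Fin n := ⟨s, by omega⟩ with his
  have hE : (univ.erase is).Nonempty := by
    rcases Nat.eq_zero_or_pos s with h0 | h0
    · exact ⟨⟨1, by omega⟩, Finset.mem_erase.2 ⟨by simp [his, Fin.ext_iff, h0], mem_univ _⟩⟩
    · exact ⟨⟨0, by omega⟩, Finset.mem_erase.2 ⟨by simp [his, Fin.ext_iff]; omega, mem_univ _⟩⟩
  set o := (univ.erase is).inf' hE T with ho
  set O := (univ.erase is).sup' hE T with hO
  have hTis : T is = G a b := by simp [hT, his]
  have hab : a ≤ b := by
    rw [ha, hb]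
    exact le_trans (inf'_le (fun k : Fin n => x (s + k)) (mem_univ (⟨0, by omega⟩ : Fin n)))
      (le_sup' (fun k : Fin n => x (s + k)) (mem_univ (⟨0, by omega⟩ : Fin n)))
  have hoO : o ≤ O := by
    obtain ⟨j0, hj0⟩ := hE
    exact le_trans (inf'_le _ hj0) (le_sup' _ hj0)
  -- tuple inf/sup computations
  have hinfT : univ.inf' hne T = min o (T is) := by
    refine le_antisymm (le_min (le_inf' _ _ fun j hj => inf'_le _ (mem_univ j))
      (inf'_le _ (mem_univ is))) (le_inf' _ _ fun j _ => ?_)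
    rcases eq_or_ne j is with rfl | hji
    · exact min_le_right _ _
    · exact le_trans (min_le_left _ _) (inf'_le _ (Finset.mem_erase.2 ⟨hji, mem_univ _⟩))
  have hsupT : univ.sup' hne T = max O (T is) := by
    refine le_antisymm (sup'_le _ _ fun j _ => ?_) (max_le (sup'_le _ _ fun j hj => le_sup' _ (mem_univ j))
      (le_sup' _ (mem_univ is)))
    rcases eq_or_ne j is with rfl | hji
    · exact le_max_right _ _
    · exact le_trans (le_sup' _ (Finset.mem_erase.2 ⟨hji, mem_univ _⟩)) (le_max_left _ _)
  -- global inf = min o a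
  have hm1 : (Finset.range (2 * n - 1)).inf' hR x = min o a := by
    refine le_antisymm (le_min (le_inf' _ _ fun j hj => ?_) (le_inf' _ _ fun k _ => ?_))
      (le_inf' _ _ fun j hj => ?_)
    · -- inf range ≤ T j for j in erase
      obtain ⟨hji, -⟩ := Finset.mem_erase.1 hj
      have hjs : (j : ℕ) ≠ s := fun h => hji (Fin.ext (by simp [his, h]))
      rcases lt_or_gt_of_ne hjs with h1 | h1
      · have : T j = x j := by simp [hT, h1]
        rw [this]; exact inf'_le _ (Finset.mem_range.2 (by omega))
      · have : T j = x (j + n - 1) := by simp [hT, Nat.lt_asymm h1, Nat.ne_of_gt h1]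
        rw [this]; exact inf'_le _ (Finset.mem_range.2 (by have := j.isLt; omega))
    · exact inf'_le _ (Finset.mem_range.2 (by have := (k : Fin n).isLt; omega))
    · -- min o a ≤ x j for j in range (2n-1)
      rw [Finset.mem_range] at hj
      rcases lt_or_ge j s with h1 | h1
      · refine le_trans (min_le_left _ _) ?_
        have hjn : j < n := by omega
        have hmem : (⟨j, hjn⟩ : Fin n) ∈ univ.erase is :=
          Finset.mem_erase.2 ⟨by simp [his, Fin.ext_iff]; omega, mem_univ _⟩
        have := inf'_le T hmem
        simp only [hT, Fin.val_mk] at this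
        rwa [if_pos h1] at this
      · rcases lt_or_ge j (s + n) with h2 | h2
        · refine le_trans (min_le_right _ _) ?_
          have hk : j - s < n := by omega
          have := inf'_le (fun k : Fin n => x (s + k)) (mem_univ (⟨j - s, hk⟩ : Fin n))
          simp only [Fin.val_mk] at this
          rwa [Nat.add_sub_cancel' h1] at this
        · refine le_trans (min_le_left _ _) ?_
          have hjn : j - n + 1 < n := by omega
          have hmem : (⟨j - n + 1, hjn⟩ : Fin n) ∈ univ.erase is :=
            Finset.mem_erase.2 ⟨by simp [his, Fin.ext_iff]; omega, mem_univ _⟩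
          have := inf'_le T hmem
          have he : j - n + 1 + n - 1 = j := by omega
          simp only [hT, Fin.val_mk] at this
          rwa [if_neg (show ¬ (j - n + 1 < s) by omega),
            if_neg (show ¬ (j - n + 1 = s) by omega), he] at this
  -- global sup = max O b
  have hm2 : (Finset.range (2 * n - 1)).sup' hR x = max O b := by
    refine le_antisymm (sup'_le _ _ fun j hj => ?_)
      (max_le (sup'_le _ _ fun j hj => ?_) (sup'_le _ _ fun k _ => ?_))
    · rw [Finset.mem_range] at hj
      rcases lt_or_ge j s with h1 | h1
      · refine le_trans ?_ (le_max_left _ _)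
        have hjn : j < n := by omega
        have hmem : (⟨j, hjn⟩ : Fin n) ∈ univ.erase is :=
          Finset.mem_erase.2 ⟨by simp [his, Fin.ext_iff]; omega, mem_univ _⟩
        have := le_sup' T hmem
        simp only [hT, Fin.val_mk] at this
        rwa [if_pos h1] at this
      · rcases lt_or_ge j (s + n) with h2 | h2
        · refine le_trans ?_ (le_max_right _ _)
          have hk : j - s < n := by omega
          have := le_sup' (fun k : Fin n => x (s + k)) (mem_univ (⟨j - s, hk⟩ : Fin n))
          simp only [Fin.val_mk] at this
          rwa [Nat.add_sub_cancel' h1] at this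
        · refine le_trans ?_ (le_max_left _ _)
          have hjn : j - n + 1 < n := by omega
          have hmem : (⟨j - n + 1, hjn⟩ : Fin n) ∈ univ.erase is :=
            Finset.mem_erase.2 ⟨by simp [his, Fin.ext_iff]; omega, mem_univ _⟩
          have := le_sup' T hmem
          have he : j - n + 1 + n - 1 = j := by omega
          simp only [hT, Fin.val_mk] at this
          rwa [if_neg (show ¬ (j - n + 1 < s) by omega),
            if_neg (show ¬ (j - n + 1 = s) by omega), he] at this
    · obtain ⟨hji, -⟩ := Finset.mem_erase.1 hj
      have hjs : (j : ℕ) ≠ s := fun h => hji (Fin.ext (by simp [his, h]))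
      rcases lt_or_gt_of_ne hjs with h1 | h1
      · have : T j = x j := by simp [hT, h1]
        rw [this]; exact le_sup' _ (Finset.mem_range.2 (by omega))
      · have : T j = x (j + n - 1) := by simp [hT, Nat.lt_asymm h1, Nat.ne_of_gt h1]
        rw [this]; exact le_sup' _ (Finset.mem_range.2 (by have := j.isLt; omega))
    · exact le_sup' _ (Finset.mem_range.2 (by have := (k : Fin n).isLt; omega))
  rw [hinfT, hsupT, hTis, hm1, hm2]
  exact key_abs G hq hm o O a b hab hoO
end Aux2

theorem stmt_7 {X : Type*} [LinearOrder X] {n : ℕ} (hn : 2 ≤ n)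
    (G : X → X → X)
    (hq : ∀ x y, G x y = x ∨ G x y = y)
    (hm : ∀ x x' y y', x ≤ x' → y ≤ y' → G x y ≤ G x' y') :
    NAssoc n (fun x : Fin n → X =>
      G (Finset.univ.inf' (Finset.univ_nonempty_iff.mpr ⟨⟨0, by omega⟩⟩) x)
        (Finset.univ.sup' (Finset.univ_nonempty_iff.mpr ⟨⟨0, by omega⟩⟩) x)) := by
  intro x i hi
  have hne : (Finset.univ : Finset (Fin n)).Nonempty :=
    Finset.univ_nonempty_iff.mpr ⟨⟨0, by omega⟩⟩
  have hR : (Finset.range (2 * n - 1)).Nonempty := ⟨0, Finset.mem_range.2 (by omega)⟩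
  exact (side_lem hn G hq hm x i (by omega) hne hR).trans
    (side_lem hn G hq hm x (i + 1) (by omega) hne hR).symm
end

section
/- Let F : X^n → X be associative and derived from two associative binary operations H and H'. If both H and H' are idempotent, then H = H'. -/
theorem stmt_9 {X : Type*} {n : ℕ} (hn : 2 ≤ n) (F : (Fin n → X) → X)
    (H H' : X → X → X)
    (hF : NAssoc n F)
    (hH : ∀ x y z, H (H x y) z = H x (H y z))
    (hH' : ∀ x y z, H' (H' x y) z = H' x (H' y z))
    (hFH : DerivedFrom F H) (hFH' : DerivedFrom F H')
    (hiH : ∀ x, H x x = x) (hiH' : ∀ x, H' x x = x) :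
    H = H' := by
  funext a b
  set x : ℕ → X := fun k => if k = 0 then a else b with hx
  have key : ∀ (G : X → X → X), (∀ u v w, G (G u v) w = G u (G v w)) →
      (∀ u, G u u = u) → ∀ k, iterComp G x (k + 1) = G a b := by
    intro G hGa hGi k
    induction k with
    | zero => simp [iterComp, hx]
    | succ m ih =>
      show G (iterComp G x (m + 1)) (x (m + 2)) = G a b
      rw [ih]
      simp only [hx, if_neg (by omega : ¬ m + 2 = 0)]
      rw [hGa, hGi]
  obtain ⟨m, hm⟩ : ∃ m, n - 1 = m + 1 := ⟨n - 2, by omega⟩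
  have h1 := hFH x
  have h2 := hFH' x
  rw [hm, key H hH hiH] at h1
  rw [hm, key H' hH' hiH'] at h2
  rw [← h1, h2]
end

section
/- Let F : X^n → X be symmetric and associative, and suppose F is derived from a surjective associative binary operation H : X² → X. Then H is symmetric. -/
theorem stmt_10 {X : Type*} {n : ℕ} (hn : 2 ≤ n) (F : (Fin n → X) → X)
    (H : X → X → X)
    (hs : Symm F) (hF : NAssoc n F)
    (hH : ∀ x y z, H (H x y) z = H x (H y z))
    (hsurj : Function.Surjective fun p : X × X => H p.1 p.2)
    (hFH : DerivedFrom F H) :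
    ∀ x y, H x y = H y x := by
  obtain ⟨m, rfl⟩ : ∃ m, n = m + 2 := ⟨n - 2, by omega⟩
  have congrIC : ∀ k (x y : ℕ → X), (∀ i ≤ k, x i = y i) →
      iterComp H x k = iterComp H y k := by
    intro k
    induction k with
    | zero => intro x y h; exact h 0 le_rfl
    | succ k ih =>
      intro x y h
      simp only [iterComp]
      rw [ih x y fun i hi => h i (Nat.le_succ_of_le hi), h (k+1) le_rfl]
  have surjIC : ∀ k z, ∃ x, iterComp H x k = z := by
    intro k
    induction k with
    | zero => intro z; exact ⟨fun _ => z, rfl⟩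
    | succ k ih =>
      intro z
      obtain ⟨⟨a, b⟩, hab⟩ := hsurj z
      obtain ⟨x, hx⟩ := ih a
      refine ⟨fun i => if i = k + 1 then b else x i, ?_⟩
      simp only [iterComp]
      rw [congrIC k _ x (by intro i hi; simp [Nat.ne_of_lt (Nat.lt_succ_of_le hi)]), hx]
      simpa using hab
  have shiftIC : ∀ k (x : ℕ → X),
      iterComp H x (k+1) = H (x 0) (iterComp H (fun i => x (i+1)) k) := by
    intro k
    induction k with
    | zero => intro x; rfl
    | succ k ih =>
      intro x
      show H (iterComp H x (k+1)) (x (k+2)) = _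
      rw [ih, hH]
      rfl
  intro a z
  obtain ⟨x', hx'⟩ := surjIC m z
  set x : ℕ → X := fun i => if i = 0 then a else x' (i - 1) with hxdef
  have h1 : H a z = iterComp H x (m + 1) := by
    rw [shiftIC]
    congr 1
    rw [← hx']
    exact (congrIC m _ x' (fun i hi => by simp [hxdef])).symm |>.symm
  have h2 : iterComp H x (m+1) = F (fun i : Fin (m+2) => x i) := (hFH x).symm
  set y : ℕ → X := fun k => x ((k+1) % (m+2)) with hydef
  have h3 : F (fun i : Fin (m+2) => x i) = F (fun i : Fin (m+2) => y i) := by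
    have hsym := hs (fun i : Fin (m+2) => x (i : ℕ)) (finRotate (m+2))
    rw [← hsym]
    congr 1
    funext i
    simp [Function.comp, hydef, finRotate_succ_apply, Fin.val_add, Fin.val_one]
  have h4 : F (fun i : Fin (m+2) => y i) = H z a := by
    rw [hFH y]
    show H (iterComp H y m) (y (m+1)) = H z a
    have hy1 : y (m+1) = a := by simp [hydef, hxdef, Nat.mod_self]
    have hy2 : iterComp H y m = z := by
      rw [← hx']
      refine congrIC m y x' fun i hi => ?_
      have hmod : (i+1) % (m+2) = i+1 := Nat.mod_eq_of_lt (by omega)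
      simp [hydef, hxdef, hmod]
    rw [hy1, hy2]
  rw [h1, h2, h3, h4]
end

section
/- An operation F : X^n → X is quasitrivial, symmetric, associative, and derived from a quasitrivial associative binary operation H : X² → X if and only if there exists a linear order ⪯ on X such that F(x_1,...,x_n) = max_⪯{x_1,...,x_n} for all x_1,...,x_n. -/
/-- Characterization of `iterComp` as the maximum, for a max-like `H`. -/
lemma iterComp_max {X : Type*} (H : X → X → X) (r : X → X → Prop)
    (hrefl : ∀ a, r a a) (htrans : ∀ a b c, r a b → r b c → r a c)
    (hub : ∀ a b, r a (H a b) ∧ r b (H a b))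
    (hmem : ∀ a b, H a b = a ∨ H a b = b)
    (x : ℕ → X) (k : ℕ) :
    (∃ i ≤ k, iterComp H x k = x i) ∧ ∀ i ≤ k, r (x i) (iterComp H x k) := by
  induction k with
  | zero =>
      refine ⟨⟨0, le_refl _, rfl⟩, fun i hi => ?_⟩
      interval_cases i
      exact hrefl _
  | succ k ih =>
      constructor
      · rcases hmem (iterComp H x k) (x (k+1)) with h | h
        · obtain ⟨i, hik, hi⟩ := ih.1
          exact ⟨i, by omega, by rw [iterComp, h, hi]⟩
        · exact ⟨k+1, le_refl _, by rw [iterComp, h]⟩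
      · intro i hi
        rcases Nat.lt_or_ge i (k+1) with h | h
        · exact htrans _ _ _ (ih.2 i (by omega)) (hub _ _).1
        · have hik : i = k+1 := by omega
          subst hik
          exact (hub _ _).2

theorem stmt_11 {X : Type*} {n : ℕ} (hn : 2 ≤ n) (F : (Fin n → X) → X) :
    (Quasitrivial F ∧ Symm F ∧ NAssoc n F ∧
      ∃ H : X → X → X, (∀ x y, H x y = x ∨ H x y = y) ∧
        (∀ x y z, H (H x y) z = H x (H y z)) ∧ DerivedFrom F H) ↔
    ∃ r : X → X → Prop, IsLinearOrder X r ∧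
      ∀ x : Fin n → X, (∃ i, F x = x i) ∧ ∀ i, r (x i) (F x) := by
  constructor
  · rintro ⟨_, S, _, H, hqt, hassoc, hder⟩
    have idem : ∀ a, H a a = a := by
      intro a; rcases hqt a a with h | h <;> exact h
    -- commutativity of H from symmetry of F
    have comm : ∀ p q, H p q = H q p := by
      intro p q
      set a : ℕ → X := fun k => if k = 0 then p else q with ha
      set b : ℕ → X := fun k => if k = n - 1 then p else q with hb
      have hFa : F (fun i : Fin n => a i) = H p q := by
        rw [hder a]
        have key : ∀ k, 1 ≤ k → iterComp H a k = H p q := by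
          intro k hk
          induction k with
          | zero => omega
          | succ m ih =>
              rcases Nat.eq_or_lt_of_le hk with h | h
              · have hm : m = 0 := by omega
                subst hm
                show H (iterComp H a 0) (a 1) = H p q
                simp [iterComp, ha]
              · have h1 : 1 ≤ m := by omega
                show H (iterComp H a m) (a (m+1)) = H p q
                rw [ih h1]
                have : a (m+1) = q := by simp [ha]
                rw [this, hassoc, idem]
        exact key (n-1) (by omega)
      have hFb : F (fun i : Fin n => b i) = H q p := by
        rw [hder b]
        have key : ∀ k, k < n - 1 → iterComp H b k = q := by
          intro k hk
          induction k with
          | zero =>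
              show b 0 = q
              simp only [hb]
              rw [if_neg (by omega)]
          | succ m ih =>
              show H (iterComp H b m) (b (m+1)) = q
              rw [ih (by omega)]
              have : b (m+1) = q := by simp only [hb]; rw [if_neg (by omega)]
              rw [this, idem]
        have hstep : n - 1 = (n - 2) + 1 := by omega
        rw [hstep]
        show H (iterComp H b (n-2)) (b (n-2+1)) = H q p
        rw [key (n-2) (by omega)]
        have : b (n-2+1) = p := by simp only [hb]; rw [if_pos (by omega)]
        rw [this]
      -- σ swaps 0 and n-1
      have h0 : (0 : ℕ) < n := by omega
      have hl : n - 1 < n := by omega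
      set z : Fin n := ⟨0, h0⟩
      set l : Fin n := ⟨n - 1, hl⟩
      have hσ : (fun i : Fin n => a (i : ℕ)) ∘ (Equiv.swap z l) = fun i : Fin n => b (i : ℕ) := by
        funext j
        simp only [Function.comp_apply, Equiv.swap_apply_def]
        by_cases hjz : j = z
        · subst hjz
          rw [if_pos rfl]
          simp only [ha, hb, l, z]
          rw [if_neg (by omega), if_neg (by omega)]
        · by_cases hjl : j = l
          · subst hjl
            rw [if_neg hjz, if_pos rfl]
            simp [ha, hb, l, z]
          · rw [if_neg hjz, if_neg hjl]
            have h1 : (j : ℕ) ≠ 0 := by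
              intro h; exact hjz (Fin.ext h)
            have h2 : (j : ℕ) ≠ n - 1 := by
              intro h; exact hjl (Fin.ext h)
            simp only [ha, hb]
            rw [if_neg h1, if_neg h2]
      have := S (fun i : Fin n => a (i : ℕ)) (Equiv.swap z l)
      rw [hσ, hFa, hFb] at this
      exact this.symm
    set r : X → X → Prop := fun a b => H a b = b with hr
    have hrefl : ∀ a, r a a := idem
    have htrans : ∀ a b c, r a b → r b c → r a c := by
      intro a b c hab hbc
      show H a c = c
      calc H a c = H a (H b c) := by rw [hbc]
      _ = H (H a b) c := (hassoc _ _ _).symm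
      _ = H b c := by rw [hab]
      _ = c := hbc
    have hanti : ∀ a b, r a b → r b a → a = b := by
      intro a b hab hba
      have := comm a b
      rw [hab, hba] at this
      exact this.symm
    have htot : ∀ a b, r a b ∨ r b a := by
      intro a b
      rcases hqt a b with h | h
      · right; show H b a = a; rw [comm b a]; exact h
      · left; exact h
    have hub : ∀ a b, r a (H a b) ∧ r b (H a b) := by
      intro a b
      constructor
      · show H a (H a b) = H a b
        rw [← hassoc, idem]
      · show H b (H a b) = H a b
        rw [comm a b, ← hassoc, idem]
    refine ⟨r, { refl := hrefl, trans := htrans, antisymm := hanti, total := htot }, ?_⟩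
    intro x
    have hx0 : (0 : ℕ) < n := by omega
    set x' : ℕ → X := fun k => if h : k < n then x ⟨k, h⟩ else x ⟨0, hx0⟩ with hx'
    have hxx : (fun i : Fin n => x' (i : ℕ)) = x := by
      funext i
      simp only [hx', i.isLt, dif_pos, Fin.eta]
    have hFx : F x = iterComp H x' (n - 1) := by
      rw [← hxx]; exact hder x'
    obtain ⟨hex, hall⟩ := iterComp_max H r hrefl htrans hub hqt x' (n - 1)
    constructor
    · obtain ⟨i, hik, hi⟩ := hex
      have hin : i < n := by omega
      refine ⟨⟨i, hin⟩, ?_⟩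
      rw [hFx, hi]
      simp only [hx', dif_pos hin]
    · intro i
      have := hall (i : ℕ) (by omega)
      rw [← hFx] at this
      have hxi : x' (i : ℕ) = x i := by
        simp only [hx', i.isLt, dif_pos, Fin.eta]
      rwa [hxi] at this
  · rintro ⟨r, hlin, P⟩
    classical
    have hrefl : ∀ a, r a a := hlin.refl
    have htrans : ∀ a b c, r a b → r b c → r a c := fun a b c => hlin.trans a b c
    have hanti : ∀ a b, r a b → r b a → a = b := fun a b => hlin.antisymm a b
    have htot : ∀ a b, r a b ∨ r b a := hlin.total
    refine ⟨fun x => (P x).1, ?_, ?_, ?_⟩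
    · -- Symm
      intro x σ
      apply hanti
      · obtain ⟨i, hi⟩ := (P (x ∘ σ)).1
        rw [hi]
        exact (P x).2 (σ i)
      · obtain ⟨i, hi⟩ := (P x).1
        rw [hi]
        have := (P (x ∘ σ)).2 (σ.symm i)
        simpa using this
    · -- NAssoc
      intro x i hi
      -- key characterization
      have key : ∀ m : ℕ, m < n →
          (∃ k ≤ 2*n - 2, F (fun j : Fin n => if (j : ℕ) < m then x j
            else if (j : ℕ) = m then F (fun k : Fin n => x (m + k)) else x (j + n - 1)) = x k) ∧
          (∀ k ≤ 2*n - 2, r (x k) (F (fun j : Fin n => if (j : ℕ) < m then x j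
            else if (j : ℕ) = m then F (fun k : Fin n => x (m + k)) else x (j + n - 1)))) := by
        intro m hm
        set g : Fin n → X := fun k => x (m + k) with hg
        set u : Fin n → X := fun j => if (j : ℕ) < m then x j
            else if (j : ℕ) = m then F g else x ((j : ℕ) + n - 1) with hu
        have hum : u ⟨m, hm⟩ = F g := by
          simp [hu]
        constructor
        · obtain ⟨j, hj⟩ := (P u).1
          by_cases h1 : (j : ℕ) < m
          · refine ⟨j, by omega, ?_⟩
            rw [hj]; simp only [hu]; rw [if_pos h1]
          · by_cases h2 : (j : ℕ) = m
            · obtain ⟨l, hl⟩ := (P g).1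
              refine ⟨m + l, by omega, ?_⟩
              rw [hj]
              simp only [hu]
              rw [if_neg h1, if_pos h2, hl]
            · refine ⟨(j : ℕ) + n - 1, by omega, ?_⟩
              rw [hj]; simp only [hu]; rw [if_neg h1, if_neg h2]
        · intro k hk
          by_cases h1 : k < m
          · have hkn : k < n := by omega
            have : u ⟨k, hkn⟩ = x k := by
              simp only [hu]; rw [if_pos h1]
            have h := (P u).2 ⟨k, hkn⟩
            rwa [this] at h
          · by_cases h2 : k < m + n
            · -- k is in the block
              have hki : m + ((⟨k - m, by omega⟩ : Fin n) : ℕ) = k := by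
                simp only []
                omega
              have hgk : g ⟨k - m, by omega⟩ = x k := by
                simp only [hg]
                rw [hki]
              have hb := (P g).2 ⟨k - m, by omega⟩
              rw [hgk] at hb
              have hu2 := (P u).2 ⟨m, hm⟩
              rw [hum] at hu2
              exact htrans _ _ _ hb hu2
            · have hj : k - n + 1 < n := by omega
              have : u ⟨k - n + 1, hj⟩ = x k := by
                simp only [hu]
                rw [if_neg (by omega), if_neg (by omega)]
                congr 1
                omega
              have h := (P u).2 ⟨k - n + 1, hj⟩
              rwa [this] at h
      obtain ⟨h1e, h1a⟩ := key i (by omega)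
      obtain ⟨h2e, h2a⟩ := key (i+1) (by omega)
      obtain ⟨k1, hk1, e1⟩ := h1e
      obtain ⟨k2, hk2, e2⟩ := h2e
      apply hanti
      · rw [e1]; exact h2a k1 hk1
      · rw [e2]; exact h1a k2 hk2
    · -- H
      refine ⟨fun a b => if r a b then b else a, ?_, ?_, ?_⟩
      · intro a b
        by_cases h : r a b
        · right; simp [h]
        · left; simp [h]
      · intro a b c
        by_cases hab : r a b <;> by_cases hbc : r b c
        · simp [hab, hbc, htrans _ _ _ hab hbc]
        · simp [hab, hbc]
        · simp [hab, hbc]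
        · have hba : r b a := (htot a b).resolve_left hab
          have hcb : r c b := (htot b c).resolve_left hbc
          by_cases hac : r a c
          · have heq : a = c := hanti _ _ hac (htrans _ _ _ hcb hba)
            exact absurd (heq ▸ hba) hbc
          · simp [hab, hbc, hac]
      · intro x
        set H : X → X → X := fun a b => if r a b then b else a with hH
        have hub : ∀ a b, r a (H a b) ∧ r b (H a b) := by
          intro a b
          simp only [hH]
          split_ifs with h
          · exact ⟨h, hrefl b⟩
          · exact ⟨hrefl a, (htot a b).resolve_left h⟩
        have hmem : ∀ a b, H a b = a ∨ H a b = b := by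
          intro a b
          simp only [hH]
          split_ifs with h
          · right; rfl
          · left; rfl
        obtain ⟨hex, hall⟩ := iterComp_max H r hrefl htrans hub hmem x (n-1)
        set y : Fin n → X := fun i => x (i : ℕ) with hy
        apply hanti
        · obtain ⟨j, hj⟩ := (P y).1
          rw [hj]
          exact hall (j : ℕ) (by omega)
        · obtain ⟨i, hik, hi⟩ := hex
          rw [hi]
          have := (P y).2 ⟨i, by omega⟩
          simpa [hy] using this
end

section
/- Let (X,≤) be a linearly ordered set and ⪯ another linear order on X, and let F : X^n → X be defined by F(x_1,...,x_n) = max_⪯{x_1,...,x_n}. Then F is nondecreasing with respect to ≤ (in each argument) if and only if ⪯ is single-peaked with respect to ≤. -/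
theorem stmt_12 {X : Type*} [LinearOrder X] {n : ℕ} (hn : 2 ≤ n)
    (r : X → X → Prop) (hr : IsLinearOrder X r)
    (F : (Fin n → X) → X)
    (hF : ∀ x : Fin n → X, (∃ i, F x = x i) ∧ ∀ i, r (x i) (F x)) :
    (∀ x y : Fin n → X, (∀ i, x i ≤ y i) → F x ≤ F y) ↔
    (∀ a b c : X, a < b → b < c → (r b a ∧ b ≠ a) ∨ (r b c ∧ b ≠ c)) := by
  have anti : ∀ a b : X, r a b → r b a → a = b :=
    fun a b => hr.toIsPartialOrder.toAntisymm.antisymm a b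
  have tra : ∀ a b c : X, r a b → r b c → r a c :=
    fun a b c => hr.toIsPartialOrder.toIsPreorder.toIsTrans.trans a b c
  have tot : ∀ a b : X, r a b ∨ r b a := fun a b => hr.toTotal.total a b
  have rfl' : ∀ a : X, r a a := fun a => hr.toIsPartialOrder.toIsPreorder.toRefl.refl a
  have key : ∀ (x : Fin n → X) (v : X), (∀ i, r (x i) v) → (∃ i, x i = v) → F x = v := by
    rintro x v hle ⟨i, hi⟩
    obtain ⟨j, hj⟩ := (hF x).1
    exact anti _ _ (hj ▸ hle j) (hi ▸ (hF x).2 i)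
  constructor
  · intro mono a b c hab hbc
    by_contra hcon
    push_neg at hcon
    have hba : ¬ r b a := fun h => hab.ne' (hcon.1 h)
    have hbc' : ¬ r b c := fun h => hbc.ne (hcon.2 h)
    have hab' : r a b := (tot a b).resolve_right hba
    have hcb : r c b := (tot c b).resolve_right hbc'
    set i0 : Fin n := ⟨0, by omega⟩ with hi0
    set i1 : Fin n := ⟨1, by omega⟩ with hi1
    have hne : i1 ≠ i0 := by simp [hi0, hi1, Fin.ext_iff]
    rcases tot a c with hac | hca
    · -- x = (c at 0, a else), y = (c at 0, b else); F x = c, F y = b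
      have hx : F (fun k => if k = i0 then c else a) = c := by
        apply key
        · intro k; by_cases h : k = i0 <;> simp [h, hac, rfl']
        · exact ⟨i0, by simp⟩
      have hy : F (fun k => if k = i0 then c else b) = b := by
        apply key
        · intro k; by_cases h : k = i0 <;> simp [h, hcb, rfl']
        · exact ⟨i1, by simp [hne]⟩
      have := mono (fun k => if k = i0 then c else a) (fun k => if k = i0 then c else b)
        (fun k => by by_cases h : k = i0 <;> simp [h, le_of_lt hbc, le_of_lt hab])
      rw [hx, hy] at this
      exact absurd this (not_le.mpr hbc)
    · -- x = (a at 0, b else), y = (a at 0, c else); F x = b, F y = a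
      have hx : F (fun k => if k = i0 then a else b) = b := by
        apply key
        · intro k; by_cases h : k = i0 <;> simp [h, hab', rfl']
        · exact ⟨i1, by simp [hne]⟩
      have hy : F (fun k => if k = i0 then a else c) = a := by
        apply key
        · intro k; by_cases h : k = i0 <;> simp [h, hca, rfl']
        · exact ⟨i0, by simp⟩
      have := mono (fun k => if k = i0 then a else b) (fun k => if k = i0 then a else c)
        (fun k => by by_cases h : k = i0 <;> simp [h, le_of_lt hbc, le_of_lt hab])
      rw [hx, hy] at this
      exact absurd this (not_le.mpr hab)
  · intro sp x y hxy
    by_contra h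
    push_neg at h
    obtain ⟨i, hi⟩ := (hF x).1
    obtain ⟨j, hj⟩ := (hF y).1
    have hvu : y j < x i := by rw [← hi, ← hj]; exact h
    have hxiyi : x i ≤ y i := hxy i
    have hyiv : r (y i) (y j) := hj ▸ (hF y).2 i
    -- Step 1 : r (x i) (y j)
    have huv : r (x i) (y j) := by
      rcases eq_or_lt_of_le hxiyi with heq | hlt
      · exact heq ▸ hyiv
      · rcases sp (y j) (x i) (y i) hvu hlt with ⟨h1, _⟩ | ⟨h1, _⟩
        · exact h1
        · exact tra _ _ _ h1 hyiv
    -- Step 2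
    have hxjyj : x j ≤ y j := hxy j
    have hxju : r (x j) (x i) := hi ▸ (hF x).2 j
    have hxjv : r (x j) (y j) := tra _ _ _ hxju huv
    rcases eq_or_lt_of_le hxjyj with heq | hlt
    · have : x i = y j := anti _ _ huv (heq ▸ hxju)
      exact absurd this (ne_of_gt hvu)
    · rcases sp (x j) (y j) (x i) hlt hvu with ⟨h1, h2⟩ | ⟨h1, h2⟩
      · exact h2 (anti _ _ h1 hxjv)
      · exact h2 (anti _ _ h1 huv)
end

section
/- If F : X^n → X is ultrabisymmetric, then F is bisymmetric. Conversely, if F is symmetric and bisymmetric, then F is ultrabisymmetric. -/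
section Aux

variable {X : Type*} {n : ℕ}

/-- `F` applied to the `F`-values of the rows of the matrix `A` (uncurried). -/
def Gm (F : (Fin n → X) → X) (A : Fin n × Fin n → X) : X :=
  F (fun i => F (fun j => A (i, j)))

lemma swap_matrix_eq (F : (Fin n → X) → X) (M : Fin n → Fin n → X) (p q : Fin n × Fin n) :
    (fun i => F (fun j =>
      if (i, j) = p then M q.1 q.2 else if (i, j) = q then M p.1 p.2 else M i j))
    = fun i => F (fun j => (fun z : Fin n × Fin n => M z.1 z.2) (Equiv.swap p q (i, j))) := by
  funext i; congr 1; funext j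
  rw [Equiv.swap_apply_def]
  split_ifs <;> rfl

lemma Gm_transpose {F : (Fin n → X) → X} (hb : Bisymm F) (A : Fin n × Fin n → X) :
    Gm F A = Gm F (fun z => A (z.2, z.1)) :=
  hb fun i j => A (i, j)

lemma Gm_row_swap {F : (Fin n → X) → X} (hs : Symm F) (A : Fin n × Fin n → X)
    (i j l : Fin n) :
    Gm F (fun z => A (Equiv.swap (i, j) (i, l) z)) = Gm F A := by
  unfold Gm
  congr 1
  funext r
  by_cases hr : r = i
  · subst hr
    have h : (fun c => A (Equiv.swap (r, j) (r, l) (r, c)))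
        = (fun c => A (r, c)) ∘ (Equiv.swap j l) := by
      funext c
      simp only [Function.comp_apply]
      congr 1
      simp only [Equiv.swap_apply_def, Prod.mk.injEq, Prod.ext_iff]
      split_ifs <;> simp_all
    rw [h, hs]
  · have h : ∀ c, Equiv.swap (i, j) (i, l) (r, c) = (r, c) := fun c =>
      Equiv.swap_apply_of_ne_of_ne (by simp [Prod.ext_iff, hr]) (by simp [Prod.ext_iff, hr])
    simp only [h]

lemma Gm_col_swap {F : (Fin n → X) → X} (hs : Symm F) (hb : Bisymm F)
    (A : Fin n × Fin n → X) (i k j : Fin n) :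
    Gm F (fun z => A (Equiv.swap (i, j) (k, j) z)) = Gm F A := by
  have key : (fun z : Fin n × Fin n => A (Equiv.swap (i, j) (k, j) (z.2, z.1)))
      = fun z : Fin n × Fin n =>
        (fun w : Fin n × Fin n => A (w.2, w.1)) (Equiv.swap (j, i) (j, k) z) := by
    funext z
    congr 1
    simp only [Equiv.swap_apply_def, Prod.mk.injEq, Prod.ext_iff]
    split_ifs <;> simp_all
  calc Gm F (fun z => A (Equiv.swap (i, j) (k, j) z))
      = Gm F (fun z : Fin n × Fin n => A (Equiv.swap (i, j) (k, j) (z.2, z.1))) :=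
        Gm_transpose hb _
    _ = Gm F (fun z : Fin n × Fin n =>
          (fun w : Fin n × Fin n => A (w.2, w.1)) (Equiv.swap (j, i) (j, k) z)) := by rw [key]
    _ = Gm F (fun w : Fin n × Fin n => A (w.2, w.1)) :=
        Gm_row_swap hs (fun w : Fin n × Fin n => A (w.2, w.1)) j i k
    _ = Gm F A := (Gm_transpose hb A).symm

lemma Gm_swap {F : (Fin n → X) → X} (hs : Symm F) (hb : Bisymm F)
    (A : Fin n × Fin n → X) (p q : Fin n × Fin n) :
    Gm F (fun z => A (Equiv.swap p q z)) = Gm F A := by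
  obtain ⟨i, j⟩ := p
  obtain ⟨k, l⟩ := q
  by_cases hik : i = k
  · subst hik; exact Gm_row_swap hs A i j l
  by_cases hjl : j = l
  · subst hjl; exact Gm_col_swap hs hb A i k j
  -- general position: conjugate through (i,l)
  have key : ∀ z : Fin n × Fin n, Equiv.swap (i, j) (k, l) z
      = Equiv.swap (i, j) (i, l)
          (Equiv.swap (i, l) (k, l) (Equiv.swap (i, j) (i, l) z)) := by
    intro z
    simp only [Equiv.swap_apply_def, Prod.ext_iff, Prod.mk.injEq]
    split_ifs <;> simp_all
  calc Gm F (fun z => A (Equiv.swap (i, j) (k, l) z))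
      = Gm F (fun z => (fun w => (fun v => A (Equiv.swap (i, j) (i, l) v))
          (Equiv.swap (i, l) (k, l) w)) (Equiv.swap (i, j) (i, l) z)) := by
        congr 1; funext z; rw [key]
    _ = Gm F (fun w => (fun v => A (Equiv.swap (i, j) (i, l) v))
          (Equiv.swap (i, l) (k, l) w)) :=
        Gm_row_swap hs (fun w => (fun v => A (Equiv.swap (i, j) (i, l) v))
          (Equiv.swap (i, l) (k, l) w)) i j l
    _ = Gm F (fun v => A (Equiv.swap (i, j) (i, l) v)) :=
        Gm_col_swap hs hb (fun v => A (Equiv.swap (i, j) (i, l) v)) i k l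
    _ = Gm F A := Gm_row_swap hs A i j l

lemma Gm_perm {F : (Fin n → X) → X} (hu : UltraBisymm F)
    (σ : Equiv.Perm (Fin n × Fin n)) (A : Fin n × Fin n → X) :
    Gm F (fun z => A (σ z)) = Gm F A := by
  have hswap : ∀ (A : Fin n × Fin n → X) (p q : Fin n × Fin n),
      Gm F A = Gm F (fun z => A (Equiv.swap p q z)) := by
    intro A p q
    exact (hu (fun i j => A (i, j)) p q).trans
      (congrArg F (swap_matrix_eq F (fun i j => A (i, j)) p q))
  revert A
  refine Equiv.Perm.swap_induction_on
    (motive := fun σ => ∀ A : Fin n × Fin n → X, Gm F (fun z => A (σ z)) = Gm F A) σ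
    (fun A => by simp only [Equiv.Perm.one_apply]) ?_
  intro f x y hxy ih A
  have h1 : (fun z => A ((Equiv.swap x y * f) z))
      = fun z => (fun w => A (Equiv.swap x y w)) (f z) := by
    funext z; simp [Equiv.Perm.mul_apply]
  calc Gm F (fun z => A ((Equiv.swap x y * f) z))
      = Gm F (fun z => (fun w => A (Equiv.swap x y w)) (f z)) := by rw [h1]
    _ = Gm F (fun w => A (Equiv.swap x y w)) := ih (fun w => A (Equiv.swap x y w))
    _ = Gm F A := (hswap A x y).symm

end Aux

theorem stmt_15 {X : Type*} {n : ℕ} (hn : 2 ≤ n) (F : (Fin n → X) → X) :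
    (UltraBisymm F → Bisymm F) ∧ (Symm F → Bisymm F → UltraBisymm F) := by
  constructor
  · intro hu M
    have := Gm_perm hu (Equiv.prodComm (Fin n) (Fin n)) (fun z => M z.1 z.2)
    exact this.symm
  · intro hs hb M p q
    rw [swap_matrix_eq]
    exact (Gm_swap hs hb (fun z => M z.1 z.2) p q).symm
end

section
/- If F : X^n → X is surjective and ultrabisymmetric, then F is symmetric. -/
theorem stmt_16 {X : Type*} {n : ℕ} (hn : 2 ≤ n) (F : (Fin n → X) → X)
    (hsurj : Function.Surjective F) (hu : UltraBisymm F) : Symm F := by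
  -- Key lemma: swapping two whole rows of the matrix does not change the value.
  have key : ∀ (M : Fin n → Fin n → X) (a b : Fin n),
      F (fun i => F (M i)) = F (fun i => F (M (Equiv.swap a b i))) := by
    intro M a b
    by_cases hab : a = b
    · simp [hab]
    have main : ∀ t : ℕ, t ≤ n →
        F (fun i => F (M i)) =
        F (fun i => F (fun j => if (j : ℕ) < t then M (Equiv.swap a b i) j else M i j)) := by
      intro t
      induction t with
      | zero => intro _; simp
      | succ t ih =>
        intro ht
        have ht' : t < n := ht
        rw [ih (le_of_lt ht')]
        have hstep := hu (fun i j => if (j : ℕ) < t then M (Equiv.swap a b i) j else M i j)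
          (a, ⟨t, ht'⟩) (b, ⟨t, ht'⟩)
        rw [hstep]
        congr 1
        funext i
        congr 1
        funext j
        by_cases hjt : (j : ℕ) = t
        · have hj : j = ⟨t, ht'⟩ := Fin.ext hjt
          subst hj
          rcases eq_or_ne i a with hia | hia
          · subst hia
            simp [Prod.ext_iff, hab, Equiv.swap_apply_left]
          · rcases eq_or_ne i b with hib | hib
            · subst hib
              simp [Prod.ext_iff, hab, hia, Equiv.swap_apply_right]
            · simp [Prod.ext_iff, hia, hib, Equiv.swap_apply_of_ne_of_ne hia hib,
                Nat.lt_succ_iff]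
        · have hp : ((i, j) : Fin n × Fin n) ≠ (a, ⟨t, ht'⟩) := by
            simp [Prod.ext_iff, Fin.ext_iff]; intro _; exact hjt
          have hq : ((i, j) : Fin n × Fin n) ≠ (b, ⟨t, ht'⟩) := by
            simp [Prod.ext_iff, Fin.ext_iff]; intro _; exact hjt
          simp only [if_neg hp, if_neg hq]
          have : (j : ℕ) < t + 1 ↔ (j : ℕ) < t := by omega
          simp [this]
    have hfin := main n le_rfl
    have : (fun i => F (fun j => if (j : ℕ) < n then M (Equiv.swap a b i) j else M i j))
        = fun i => F (M (Equiv.swap a b i)) := by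
      funext i
      congr 1
      funext j
      simp [j.isLt]
    rw [this] at hfin
    exact hfin
  -- Transposition invariance of F itself.
  have hswap : ∀ (x : Fin n → X) (a b : Fin n), F (x ∘ Equiv.swap a b) = F x := by
    intro x a b
    choose r hr using fun i => hsurj (x i)
    have h1 : F x = F (fun i => F (r i)) := by
      congr 1; funext i; rw [hr]
    have h2 : F (x ∘ Equiv.swap a b) = F (fun i => F (r (Equiv.swap a b i))) := by
      congr 1; funext i; simp [Function.comp, hr]
    rw [h1, h2, ← key r a b]
  -- General permutations via swap induction.
  have hperm : ∀ σ : Equiv.Perm (Fin n), ∀ x : Fin n → X, F (x ∘ σ) = F x := by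
    intro σ
    refine Equiv.Perm.swap_induction_on σ ?_ ?_
    · intro x
      have : x ∘ (1 : Equiv.Perm (Fin n)) = x := rfl
      rw [this]
    · intro f a b hab ih x
      have : x ∘ (Equiv.swap a b * f) = (x ∘ Equiv.swap a b) ∘ f := rfl
      rw [this, ih, hswap]
  intro x σ
  exact hperm σ x
end

section
/- If F : X^n → X is quasitrivial, then for all x,y ∈ X there exists k ∈ {1,...,n} such that F applied to (k−1 copies of x followed by n−k+1 copies of y) equals y, and F applied to (k copies of x followed by n−k copies of y) equals x. -/
theorem stmt_17 {X : Type*} {n : ℕ} (hn : 2 ≤ n) (F : (Fin n → X) → X)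
    (hq : Quasitrivial F) :
    ∀ x y : X, ∃ k : ℕ, 1 ≤ k ∧ k ≤ n ∧
      F (fun i => if (i : ℕ) < k - 1 then x else y) = y ∧
      F (fun i => if (i : ℕ) < k then x else y) = x := by
  classical
  intro x y
  by_cases hxy : x = y
  · refine ⟨1, le_refl 1, hn.trans' one_le_two, ?_, ?_⟩
    · simp only [Nat.sub_self, Nat.not_lt_zero, if_false]
      obtain ⟨i, hi⟩ := hq (fun _ => y)
      simpa using hi
    · subst hxy
      simp only [ite_self]
      obtain ⟨i, hi⟩ := hq (fun _ => x)
      simpa using hi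
  · have hP : ∃ k : ℕ, F (fun i : Fin n => if (i : ℕ) < k then x else y) = x := by
      refine ⟨n, ?_⟩
      have h2 : (fun i : Fin n => if (i : ℕ) < n then x else y) = fun _ => x := by
        funext i; simp [i.isLt]
      rw [h2]
      obtain ⟨i, hi⟩ := hq (fun _ => x)
      simpa using hi
    have hPk := Nat.find_spec hP
    set k := Nat.find hP with hk
    have hk1 : 1 ≤ k := by
      rcases Nat.eq_zero_or_pos k with h0 | h
      · exfalso
        rw [h0] at hPk
        have h2 : (fun i : Fin n => if (i : ℕ) < 0 then x else y) = fun _ => y := by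
          funext i; simp
        rw [h2] at hPk
        obtain ⟨i, hi⟩ := hq (fun _ : Fin n => y)
        exact hxy (by rw [← hPk, hi])
      · exact h
    have hkn : k ≤ n := Nat.find_le (by
      have h2 : (fun i : Fin n => if (i : ℕ) < n then x else y) = fun _ => x := by
        funext i; simp [i.isLt]
      rw [h2]
      obtain ⟨i, hi⟩ := hq (fun _ => x)
      simpa using hi)
    refine ⟨k, hk1, hkn, ?_, hPk⟩
    have hmin : ¬ F (fun i : Fin n => if (i : ℕ) < k - 1 then x else y) = x :=
      Nat.find_min hP (Nat.sub_lt hk1 one_pos)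
    obtain ⟨i, hi⟩ := hq (fun i : Fin n => if (i : ℕ) < k - 1 then x else y)
    rw [hi]
    by_cases h : (i : ℕ) < k - 1
    · exact absurd (by rw [hi]; simp [h]) hmin
    · simp [h]
end

section
/- If F : X^n → X is associative and symmetric, then F is ultrabisymmetric. Consequently, if F is quasitrivial, then F is associative and symmetric if and only if F is ultrabisymmetric; and if F is quasitrivial and symmetric, then F is associative if and only if F is bisymmetric. -/
section AuxST18
variable {X : Type*} {n : ℕ}

/-- swap of two naturals -/
def mySwapST (a b t : ℕ) : ℕ := if t = a then b else if t = b then a else t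

/-- substitution of an F-block at position p -/
def substNST (F : (Fin n → X) → X) (x : ℕ → X) (p : ℕ) (t : ℕ) : X :=
  if t < p then x t else if t = p then F (fun k : Fin n => x (p + (k : ℕ))) else x (t + n - 1)

/-- iterated (derived) operation of arity m*(n-1)+1 -/
def GopST (F : (Fin n → X) → X) (x : ℕ → X) : ℕ → X
  | 0 => x 0
  | m+1 => F (fun k : Fin n => if (k : ℕ) = 0 then GopST F x m else x (m*(n-1) + (k : ℕ)))

variable {F : (Fin n → X) → X}

lemma FS (hS : Symm F) (w : ℕ → X) (f g : ℕ → ℕ)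
    (hf : ∀ t, t < n → f t < n) (hg : ∀ t, t < n → g t < n)
    (hgf : ∀ t, t < n → g (f t) = t) (hfg : ∀ t, t < n → f (g t) = t) :
    F (fun j : Fin n => w (f (j : ℕ))) = F (fun j : Fin n => w (j : ℕ)) := by
  have h := hS (fun j : Fin n => w (j : ℕ))
    ⟨fun k => ⟨f k, hf _ k.2⟩, fun k => ⟨g k, hg _ k.2⟩,
     fun k => Fin.ext (hgf _ k.2), fun k => Fin.ext (hfg _ k.2)⟩
  exact h

lemma qt_const (hQ : Quasitrivial F) (c : X) : F (fun _ => c) = c := by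
  obtain ⟨i, h⟩ := hQ (fun _ => c); exact h

lemma substF (hn : 2 ≤ n) (hA : NAssoc n F) (x : ℕ → X) :
    ∀ p, p ≤ n - 1 → F (fun j : Fin n => substNST F x p (j : ℕ))
      = F (fun j : Fin n => substNST F x 0 (j : ℕ)) := by
  intro p hp
  induction p with
  | zero => rfl
  | succ p IH =>
    have h := hA x p (by omega)
    have h2 : F (fun j : Fin n => substNST F x (p+1) (j : ℕ))
        = F (fun j : Fin n => substNST F x p (j : ℕ)) := by
      exact h.symm
    rw [h2, IH (by omega)]

lemma Gext (hn : 2 ≤ n) {x y : ℕ → X} :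
    ∀ m, (∀ t, t ≤ m*(n-1) → x t = y t) → GopST F x m = GopST F y m := by
  intro m
  induction m with
  | zero => intro h; exact h 0 (by omega)
  | succ m IH =>
    intro h
    simp only [GopST]
    congr 1
    funext k
    have hk := k.2
    have e1 : (m+1)*(n-1) = m*(n-1) + (n-1) := by ring
    by_cases h0 : (k : ℕ) = 0
    · simp only [h0, if_pos rfl]
      exact IH (fun t ht => h t (by omega))
    · simp only [h0, if_neg h0]
      exact h _ (by omega)

lemma Gop_one : GopST F x 1 = F (fun k : Fin n => x (k : ℕ)) := by
  simp only [GopST]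
  congr 1
  funext k
  by_cases h0 : (k : ℕ) = 0
  · simp [h0]
  · simp [h0]

lemma Lmain (hn : 2 ≤ n) (hA : NAssoc n F) :
    ∀ m, 1 ≤ m → ∀ (x : ℕ → X) p, p ≤ m*(n-1) →
      GopST F (substNST F x p) m = GopST F x (m+1) := by
  intro m
  induction m with
  | zero => omega
  | succ m IH =>
    intro _ x p hp
    rcases Nat.eq_zero_or_pos m with hm | hm
    · -- base case m+1 = 1, p ≤ n-1
      subst hm
      rw [Gop_one]
      rw [substF hn hA x p (by simpa using hp)]
      show F _ = F _
      congr 1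
      funext k
      simp only [substNST, GopST]
      by_cases h0 : (k : ℕ) = 0
      · simp only [h0]
        norm_num
        congr 1
        funext j
        by_cases hj : (j : ℕ) = 0 <;> simp [hj]
      · have : ¬ ((k : ℕ) < 0) := by omega
        simp only [this, if_neg h0, if_neg, if_false]
        congr 1
        omega
    · -- step, m ≥ 1
      have e1 : (m+1)*(n-1) = m*(n-1) + (n-1) := by ring
      have e2 : (m+2)*(n-1) = m*(n-1) + (n-1) + (n-1) := by ring
      by_cases hpm : p ≤ m*(n-1)
      · simp only [GopST]
        congr 1
        funext k
        by_cases h0 : (k : ℕ) = 0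
        · simp only [h0, if_pos rfl]
          exact IH hm x p hpm
        · simp only [if_neg h0]
          have hk := k.2
          have hlt : ¬ (m*(n-1) + (k : ℕ) < p) := by omega
          have hne : ¬ (m*(n-1) + (k : ℕ) = p) := by omega
          simp only [substNST, if_neg hlt, if_neg hne]
          congr 1
          omega
      · -- hard case: m*(n-1) < p ≤ (m+1)*(n-1)
        set q := p - m*(n-1) with hq
        have hq1 : 1 ≤ q := by omega
        have hqn : q ≤ n - 1 := by omega
        set z : ℕ → X := fun t => if t = 0 then GopST F x m else x (m*(n-1) + t) with hz
        have stepA : GopST F (substNST F x p) (m+1) = F (fun k : Fin n => substNST F z q (k : ℕ)) := by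
          simp only [GopST]
          congr 1
          funext k
          have hk := k.2
          by_cases h0 : (k : ℕ) = 0
          · simp only [h0, if_pos rfl]
            have hz0 : substNST F z q 0 = GopST F x m := by
              simp only [substNST, if_pos (by omega : 0 < q), hz]
              simp
            rw [hz0]
            exact Gext hn m (fun t ht => by
              simp only [substNST, if_pos (by omega : t < p)])
          · simp only [if_neg h0]
            rcases lt_trichotomy ((k : ℕ)) q with hlt | heq | hgt
            · have c1 : m*(n-1) + (k : ℕ) < p := by omega
              simp only [substNST, if_pos c1, if_pos hlt, hz]
              simp only [if_neg h0]
            · have c1 : ¬ (m*(n-1) + (k : ℕ) < p) := by omega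
              have c2 : m*(n-1) + (k : ℕ) = p := by omega
              have c3 : ¬ ((k : ℕ) < q) := by omega
              simp only [substNST, if_neg c1, if_pos c2, if_neg c3, if_pos heq]
              congr 1
              funext j
              have : ¬ (q + (j : ℕ) = 0) := by omega
              simp only [hz, if_neg this]
              congr 1
              omega
            · have c1 : ¬ (m*(n-1) + (k : ℕ) < p) := by omega
              have c2 : ¬ (m*(n-1) + (k : ℕ) = p) := by omega
              have c3 : ¬ ((k : ℕ) < q) := by omega
              have c4 : ¬ ((k : ℕ) = q) := by omega
              simp only [substNST, if_neg c1, if_neg c2, if_neg c3, if_neg c4, hz]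
              have : ¬ ((k : ℕ) + n - 1 = 0) := by omega
              simp only [if_neg this]
              congr 1
              omega
        rw [stepA, substF hn hA z q hqn]
        show F _ = GopST F x (m+2)
        simp only [GopST]
        congr 1
        funext k
        have hk := k.2
        by_cases h0 : (k : ℕ) = 0
        · have c1 : ¬ ((0:ℕ) < 0) := by omega
          simp only [substNST, h0, if_neg c1, if_pos rfl]
          refine congrArg F (funext fun j => ?_)
          simp only [hz, zero_add]
        · have c1 : ¬ ((k:ℕ) < 0) := by omega
          simp only [substNST, if_neg c1, if_neg h0]
          simp only [hz]
          have : ¬ ((k : ℕ) + n - 1 = 0) := by omega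
          simp only [if_neg this, if_neg h0]
          congr 1
          omega

end AuxST18

section AuxST18B
variable {X : Type*} {n : ℕ} {F : (Fin n → X) → X}

lemma mySwap_lt {a b t : ℕ} (ha : a < n) (hb : b < n) (ht : t < n) : mySwapST a b t < n := by
  unfold mySwapST; split_ifs <;> omega

lemma mySwap_invol (a b t : ℕ) : mySwapST a b (mySwapST a b t) = t := by
  unfold mySwapST; split_ifs <;> omega

lemma gswap_adj (hn : 2 ≤ n) (hA : NAssoc n F) (hS : Symm F) :
    ∀ m, 1 ≤ m → ∀ (x : ℕ → X) a, a + 1 ≤ m*(n-1) →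
      GopST F (fun t => x (mySwapST a (a+1) t)) m = GopST F x m := by
  intro m hm x a ha
  rcases m with _ | m'
  · omega
  rcases m' with _ | m''
  · -- m = 1
    rw [Gop_one, Gop_one]
    have h1 : a + 1 ≤ n - 1 := by simpa using ha
    exact FS hS x (mySwapST a (a+1)) (mySwapST a (a+1))
      (fun t ht => mySwap_lt (by omega) (by omega) ht)
      (fun t ht => mySwap_lt (by omega) (by omega) ht)
      (fun t ht => mySwap_invol _ _ _) (fun t ht => mySwap_invol _ _ _)
  · -- arity index m'' + 2
    set m := m'' + 1 with hmdef
    have hm1 : 1 ≤ m := by omega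
    have e1 : (m+1)*(n-1) = m*(n-1) + (n-1) := by ring
    have ha' : a + 1 ≤ (m+1)*(n-1) := ha
    set p := min a (m*(n-1)) with hp
    have hpa : p ≤ a := min_le_left _ _
    have hpm : p ≤ m*(n-1) := min_le_right _ _
    have hab : a + 1 - p ≤ n - 1 := by
      rcases le_total a (m*(n-1)) with h | h
      · have : p = a := by omega
        omega
      · have : p = m*(n-1) := by omega
        omega
    have key : substNST F (fun t => x (mySwapST a (a+1) t)) p = substNST F x p := by
      funext t
      simp only [substNST]
      split_ifs with c1 c2
      · congr 1
        unfold mySwapST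
        split_ifs <;> omega
      · have point : ∀ u : ℕ, x (mySwapST a (a+1) (p + u))
            = x (p + mySwapST (a-p) (a-p+1) u) := by
          intro u
          congr 1
          unfold mySwapST
          split_ifs <;> omega
        calc F (fun k : Fin n => x (mySwapST a (a+1) (p + (k:ℕ))))
            = F (fun k : Fin n => (fun u => x (p + u)) (mySwapST (a-p) (a-p+1) (k:ℕ))) := by
              exact congrArg F (funext fun k => point (k:ℕ))
          _ = F (fun k : Fin n => x (p + (k:ℕ))) := by
              exact FS hS (fun u => x (p + u)) _ (mySwapST (a-p) (a-p+1))
                (fun t ht => mySwap_lt (by omega) (by omega) ht)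
                (fun t ht => mySwap_lt (by omega) (by omega) ht)
                (fun t ht => mySwap_invol _ _ _) (fun t ht => mySwap_invol _ _ _)
      · congr 1
        unfold mySwapST
        split_ifs <;> omega
    calc GopST F (fun t => x (mySwapST a (a+1) t)) (m+1)
        = GopST F (substNST F (fun t => x (mySwapST a (a+1) t)) p) m :=
          (Lmain hn hA m hm1 _ p hpm).symm
      _ = GopST F (substNST F x p) m := by rw [key]
      _ = GopST F x (m+1) := Lmain hn hA m hm1 x p hpm

lemma gswap (hn : 2 ≤ n) (hA : NAssoc n F) (hS : Symm F) :
    ∀ d m (x : ℕ → X) a b, 1 ≤ m → a < b → b - a ≤ d → b ≤ m*(n-1) →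
      GopST F (fun t => x (mySwapST a b t)) m = GopST F x m := by
  intro d
  induction d with
  | zero => intro m x a b _ h1 h2 _; omega
  | succ d IH =>
    intro m x a b hm hab hd hbm
    by_cases hadj : b = a + 1
    · subst hadj
      exact gswap_adj hn hA hS m hm x a hbm
    · have hb2 : a + 2 ≤ b := by omega
      have keyfun : ∀ t, mySwapST a b t
          = mySwapST (b-1) b (mySwapST a (b-1) (mySwapST (b-1) b t)) := by
        intro t
        unfold mySwapST
        split_ifs <;> omega
      have e0 : (fun t => x (mySwapST a b t))
          = (fun t => (fun u => (fun v => x (mySwapST (b-1) b v)) (mySwapST a (b-1) u))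
              (mySwapST (b-1) b t)) := by
        funext t
        simp only []
        rw [keyfun t]
      rw [e0]
      have hb1 : (b-1) + 1 = b := by omega
      have step1 : GopST F (fun t => (fun u => (fun v => x (mySwapST (b-1) b v))
            (mySwapST a (b-1) u)) (mySwapST (b-1) b t)) m
          = GopST F (fun u => (fun v => x (mySwapST (b-1) b v)) (mySwapST a (b-1) u)) m := by
        have := gswap_adj hn hA hS m hm
          (fun u => (fun v => x (mySwapST (b-1) b v)) (mySwapST a (b-1) u)) (b-1) (by omega)
        simpa [hb1] using this
      rw [step1]
      have step2 : GopST F (fun u => (fun v => x (mySwapST (b-1) b v)) (mySwapST a (b-1) u)) m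
          = GopST F (fun v => x (mySwapST (b-1) b v)) m := by
        have := IH m (fun v => x (mySwapST (b-1) b v)) a (b-1) hm (by omega) (by omega) (by omega)
        simpa using this
      rw [step2]
      have step3 : GopST F (fun v => x (mySwapST (b-1) b v)) m = GopST F x m := by
        have := gswap_adj hn hA hS m hm x (b-1) (by omega)
        simpa [hb1] using this
      rw [step3]

end AuxST18B

section AuxST18C
variable {X : Type*} {n : ℕ} {F : (Fin n → X) → X}

def rowMajST [NeZero n] (M : Fin n → Fin n → X) (t : ℕ) : X :=
  M ⟨t / n % n, Nat.mod_lt _ (Nat.pos_of_ne_zero (NeZero.ne n))⟩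
    ⟨t % n, Nat.mod_lt _ (Nat.pos_of_ne_zero (NeZero.ne n))⟩

def xmatST [NeZero n] (F : (Fin n → X) → X) (M : Fin n → Fin n → X) (j t : ℕ) : X :=
  if t < j*n then rowMajST M t
  else F (fun k : Fin n => M ⟨(j + (t - j*n)) % n, Nat.mod_lt _ (Nat.pos_of_ne_zero (NeZero.ne n))⟩ k)

lemma idx_div {j k : ℕ} (hn0 : 0 < n) (hj : j < n) (hk : k < n) :
    (j*n + k) / n % n = j ∧ (j*n + k) % n = k := by
  constructor
  · rw [mul_comm j n, Nat.mul_add_div hn0, Nat.div_eq_of_lt hk, Nat.add_zero, Nat.mod_eq_of_lt hj]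
  · rw [mul_comm j n, Nat.mul_add_mod, Nat.mod_eq_of_lt hk]

lemma flattenST (hn : 2 ≤ n) [NeZero n] (hA : NAssoc n F) (M : Fin n → Fin n → X) :
    ∀ d j, j + d = n → GopST F (xmatST F M j) (j+1) = GopST F (rowMajST M) (n+1) := by
  have hn0 : 0 < n := by omega
  intro d
  induction d with
  | zero =>
    intro j hj
    have hj' : j = n := by omega
    rw [hj']
    have esq : n*n = (n+1)*(n-1)+1 := by
      obtain ⟨m, rfl⟩ : ∃ m, n = m+2 := ⟨n-2, by omega⟩
      simp [Nat.add_sub_cancel]; ring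
    apply Gext hn
    intro t ht
    have : t < n*n := by omega
    simp only [xmatST, if_pos this]
  | succ d IH =>
    intro j hj
    have hjn : j + 1 ≤ n := by omega
    have h4 : (j+1)*((n-1)+1) = (j+1)*(n-1)+(j+1) := by ring
    rw [show n-1+1 = n from by omega] at h4
    have h5 : (j+1)*n = j*n + n := by ring
    have hple : j*n ≤ (j+1)*(n-1) := by omega
    have key : xmatST F M j = substNST F (xmatST F M (j+1)) (j*n) := by
      funext t
      rcases lt_trichotomy t (j*n) with c | c | c
      · have c2 : t < (j+1)*n := by omega
        simp only [xmatST, substNST, if_pos c, if_pos c2]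
      · subst c
        have c1 : ¬ (j*n < j*n) := by omega
        simp only [xmatST, substNST, if_neg c1, if_pos rfl, lt_irrefl, if_false]
        refine congrArg F (funext fun k => ?_)
        have hk := k.2
        have c4 : j*n + (k:ℕ) < (j+1)*n := by omega
        rw [if_pos c4]
        unfold rowMajST
        have hjlt : j < n := by omega
        obtain ⟨d1, d2⟩ := idx_div hn0 hjlt hk
        congr 1
        · refine Fin.ext ?_
          show (j + (j*n - j*n)) % n = (j*n + (k:ℕ)) / n % n
          rw [Nat.sub_self, Nat.add_zero, Nat.mod_eq_of_lt hjlt, d1]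
        · refine Fin.ext ?_
          show (k:ℕ) = (j*n + (k:ℕ)) % n
          rw [d2]
      · have c1 : ¬ (t < j*n) := by omega
        have c2 : ¬ (t = j*n) := by omega
        have c3 : ¬ (t + n - 1 < (j+1)*n) := by omega
        simp only [xmatST, substNST, if_neg c1, if_neg c2, if_neg c3]
        refine congrArg F (funext fun k => ?_)
        have e6 : j + 1 + (t + n - 1 - (j+1)*n) = j + (t - j*n) := by omega
        congr 2
        rw [e6]
    rw [key, Lmain hn hA (j+1) (by omega) _ (j*n) hple]
    exact IH (j+1) (by omega)

lemma part1ST (hn : 2 ≤ n) (hA : NAssoc n F) (hS : Symm F) : UltraBisymm F := by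
  haveI : NeZero n := ⟨by omega⟩
  have hn0 : 0 < n := by omega
  have esq : n*n = (n+1)*(n-1)+1 := by
    obtain ⟨m, rfl⟩ : ∃ m, n = m+2 := ⟨n-2, by omega⟩
    simp [Nat.add_sub_cancel]; ring
  -- step 1 : any matrix N:  F (F ∘ rows N) = Gop (rowMaj N) (n+1)
  have step1 : ∀ N : Fin n → Fin n → X,
      F (fun i => F (N i)) = GopST F (rowMajST N) (n+1) := by
    intro N
    have h0 := flattenST hn hA N n 0 (by omega)
    rw [← h0, Gop_one]
    refine congrArg F (funext fun i => ?_)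
    have hi := i.2
    have c1 : ¬ ((i:ℕ) < 0*n) := by omega
    simp only [xmatST, if_neg c1]
    refine congrArg F (funext fun k => ?_)
    congr 1
    refine Fin.ext ?_
    show (i:ℕ) = (0 + ((i:ℕ) - 0*n)) % n
    rw [Nat.zero_mul, Nat.sub_zero, Nat.zero_add, Nat.mod_eq_of_lt hi]
  intro M p q
  set a := (p.1 : ℕ) * n + (p.2 : ℕ) with hadef
  set b := (q.1 : ℕ) * n + (q.2 : ℕ) with hbdef
  set M' : Fin n → Fin n → X := fun i j =>
    if (i, j) = p then M q.1 q.2 else if (i, j) = q then M p.1 p.2 else M i j with hM'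
  have pair_idx : ∀ (r : Fin n × Fin n),
      ((⟨((r.1:ℕ)*n + (r.2:ℕ)) / n % n, Nat.mod_lt _ hn0⟩ : Fin n) = r.1)
      ∧ ((⟨((r.1:ℕ)*n + (r.2:ℕ)) % n, Nat.mod_lt _ hn0⟩ : Fin n) = r.2) := by
    intro r
    obtain ⟨d1, d2⟩ := idx_div hn0 r.1.2 r.2.2
    exact ⟨Fin.ext d1, Fin.ext d2⟩
  have hbound : ∀ (r : Fin n × Fin n), (r.1:ℕ)*n + (r.2:ℕ) ≤ (n+1)*(n-1) := by
    intro r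
    have h1 : (r.1:ℕ) ≤ n - 1 := by have := r.1.2; omega
    have h2 : (r.1:ℕ)*n ≤ (n-1)*n := Nat.mul_le_mul_right n h1
    have h3 : (n-1)*n + n = n*n := by
      have : ((n-1)+1)*n = (n-1)*n + n := by ring
      rw [show n-1+1 = n from by omega] at this
      omega
    have := r.2.2
    omega
  -- pointwise: rowMaj M' agrees with rowMaj M ∘ mySwap a b below n*n
  have ptwise : ∀ t, t < n*n → rowMajST M' t = rowMajST M (mySwapST a b t) := by
    intro t ht
    by_cases hta : t = a
    · subst hta
      have h1 : mySwapST a b a = b := by unfold mySwapST; simp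
      rw [h1]
      show M' _ _ = M _ _
      rw [(pair_idx p).1, (pair_idx p).2, (pair_idx q).1, (pair_idx q).2]
      simp only [hM', Prod.mk.eta, if_pos rfl]
    · by_cases htb : t = b
      · subst htb
        have h1 : mySwapST a b b = a := by unfold mySwapST; split_ifs <;> omega
        rw [h1]
        show M' _ _ = M _ _
        rw [(pair_idx q).1, (pair_idx q).2, (pair_idx p).1, (pair_idx p).2]
        simp only [hM', Prod.mk.eta]
        by_cases hpq : q = p
        · rw [if_pos hpq, hpq]
        · rw [if_neg hpq]
          simp
      · have h1 : mySwapST a b t = t := by unfold mySwapST; split_ifs <;> omega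
        rw [h1]
        show M' _ _ = M _ _
        have htdiv : t / n % n = t / n := Nat.mod_eq_of_lt (Nat.div_lt_of_lt_mul ht)
        have trec : (t / n % n) * n + t % n = t := by
          rw [htdiv]
          have h7 := Nat.div_add_mod t n
          have h8 : (t/n)*n = n*(t/n) := Nat.mul_comm _ _
          omega
        simp only [hM']
        rw [if_neg, if_neg]
        · intro hcon
          apply htb
          have e1 : (⟨t / n % n, Nat.mod_lt _ hn0⟩ : Fin n) = q.1 := congrArg Prod.fst hcon
          have e2 : (⟨t % n, Nat.mod_lt _ hn0⟩ : Fin n) = q.2 := congrArg Prod.snd hcon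
          have v1 : t / n % n = (q.1 : ℕ) := congrArg Fin.val e1
          have v2 : t % n = (q.2 : ℕ) := congrArg Fin.val e2
          rw [hbdef, ← v1, ← v2, trec]
        · intro hcon
          apply hta
          have e1 : (⟨t / n % n, Nat.mod_lt _ hn0⟩ : Fin n) = p.1 := congrArg Prod.fst hcon
          have e2 : (⟨t % n, Nat.mod_lt _ hn0⟩ : Fin n) = p.2 := congrArg Prod.snd hcon
          have v1 : t / n % n = (p.1 : ℕ) := congrArg Fin.val e1
          have v2 : t % n = (p.2 : ℕ) := congrArg Fin.val e2
          rw [hadef, ← v1, ← v2, trec]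
  rw [step1 M, step1 M']
  have e3 : GopST F (rowMajST M') (n+1) = GopST F (fun t => rowMajST M (mySwapST a b t)) (n+1) :=
    Gext hn (n+1) (fun t ht => ptwise t (by omega))
  rw [e3]
  -- now remove the swap
  rcases lt_trichotomy a b with hab | hab | hab
  · exact (gswap hn hA hS b (n+1) (rowMajST M) a b (by omega) hab (by omega)
      (le_trans (hbound q) (by omega))).symm
  · have : ∀ t, mySwapST a b t = t := by intro t; unfold mySwapST; split_ifs <;> omega
    refine (congrArg (fun z => GopST F z (n+1)) (funext fun t => ?_)).symm
    rw [this t]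
  · have hsymm : ∀ t, mySwapST a b t = mySwapST b a t := by
      intro t; unfold mySwapST; split_ifs <;> omega
    have e4 : GopST F (fun t => rowMajST M (mySwapST a b t)) (n+1)
        = GopST F (fun t => rowMajST M (mySwapST b a t)) (n+1) := by
      refine congrArg (fun z => GopST F z (n+1)) (funext fun t => ?_)
      rw [hsymm t]
    rw [e4]
    exact (gswap hn hA hS a (n+1) (rowMajST M) b a (by omega) hab (by omega)
      (le_trans (hbound p) (by omega))).symm

end AuxST18C

section AuxST18D
variable {X : Type*} {n : ℕ} {F : (Fin n → X) → X}

def applySwapST (p q : Fin n × Fin n) (N : Fin n → Fin n → X) : Fin n → Fin n → X :=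
  fun i j => if (i, j) = p then N q.1 q.2 else if (i, j) = q then N p.1 p.2 else N i j

lemma ub_swap (hU : UltraBisymm F) (N : Fin n → Fin n → X) (p q : Fin n × Fin n) :
    F (fun i => F (applySwapST p q N i)) = F (fun i => F (N i)) :=
  (hU N p q).symm

lemma ub_bisymm (hU : UltraBisymm F) : Bisymm F := by
  intro M
  set T : Finset (Fin n × Fin n) → (Fin n → Fin n → X) := fun s => fun i j =>
    if (i, j) ∈ s ∨ (j, i) ∈ s then M j i else M i j with hT
  have claim : ∀ s : Finset (Fin n × Fin n), (∀ r ∈ s, r.1 < r.2) →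
      F (fun i => F (T s i)) = F (fun i => F (M i)) := by
    intro s
    induction s using Finset.induction_on with
    | empty =>
      intro _
      refine congrArg F (funext fun i => congrArg F (funext fun j => ?_))
      simp [hT]
    | @insert r s hr IH =>
      intro hprop
      obtain ⟨r1, r2⟩ := r
      have hlt : r1 < r2 := hprop (r1, r2) (Finset.mem_insert_self _ s)
      have hs : ∀ u ∈ s, u.1 < u.2 := fun u hu => hprop u (Finset.mem_insert_of_mem hu)
      have hrs : (r1, r2) ∉ s := hr
      have hrev : (r2, r1) ∉ s := fun hc => absurd (hs _ hc) (not_lt.mpr hlt.le)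
      have hne12 : r1 ≠ r2 := ne_of_lt hlt
      have eqm : T (insert (r1, r2) s) = applySwapST (r1, r2) (r2, r1) (T s) := by
        funext i j
        simp only [hT, applySwapST]
        by_cases h1 : (i, j) = ((r1 : Fin n), (r2 : Fin n))
        · have hi : i = r1 := congrArg Prod.fst h1
          have hj : j = r2 := congrArg Prod.snd h1
          rw [if_pos h1]
          have m1 : (i, j) ∈ insert (r1, r2) s ∨ (j, i) ∈ insert (r1, r2) s :=
            Or.inl (by rw [h1]; exact Finset.mem_insert_self _ _)
          rw [if_pos m1]
          have m2 : ¬ ((r2, r1) ∈ s ∨ (r1, r2) ∈ s) := by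
            rintro (hc | hc)
            · exact hrev hc
            · exact hrs hc
          show M j i = ite _ (M r1 r2) (M r2 r1)
          rw [if_neg m2, hi, hj]
        · rw [if_neg h1]
          by_cases h2 : (i, j) = ((r2 : Fin n), (r1 : Fin n))
          · have hi : i = r2 := congrArg Prod.fst h2
            have hj : j = r1 := congrArg Prod.snd h2
            rw [if_pos h2]
            have m1 : (i, j) ∈ insert (r1, r2) s ∨ (j, i) ∈ insert (r1, r2) s := by
              right
              have : (j, i) = ((r1 : Fin n), (r2 : Fin n)) := by rw [hi, hj]
              rw [this]
              exact Finset.mem_insert_self _ _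
            rw [if_pos m1]
            have m2 : ¬ ((r1, r2) ∈ s ∨ (r2, r1) ∈ s) := by
              rintro (hc | hc)
              · exact hrs hc
              · exact hrev hc
            show M j i = ite _ (M r2 r1) (M r1 r2)
            rw [if_neg m2, hi, hj]
          · rw [if_neg h2]
            have e1 : (i, j) ∈ insert (r1, r2) s ↔ (i, j) ∈ s := by
              rw [Finset.mem_insert]
              exact or_iff_right h1
            have e2 : (j, i) ∈ insert (r1, r2) s ↔ (j, i) ∈ s := by
              rw [Finset.mem_insert]
              refine or_iff_right (fun hc => h2 ?_)
              have e3 : j = r1 := congrArg Prod.fst hc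
              have e4 : i = r2 := congrArg Prod.snd hc
              rw [e3, e4]
            rw [if_congr (or_congr e1 e2) rfl rfl]
      rw [eqm, ub_swap hU _ _ _, IH hs]
  have final := claim (Finset.univ.filter (fun r => r.1 < r.2))
    (fun r hr => (Finset.mem_filter.mp hr).2)
  have eT : ∀ i j, T (Finset.univ.filter (fun r => r.1 < r.2)) i j = M j i := by
    intro i j
    simp only [hT, Finset.mem_filter, Finset.mem_univ, true_and]
    by_cases hij : i = j
    · subst hij
      simp
    · rcases lt_or_gt_of_ne hij with h | h
      · rw [if_pos (Or.inl h)]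
      · rw [if_pos (Or.inr h)]
  calc F (fun i => F (M i)) = F (fun i => F (T (Finset.univ.filter (fun r => r.1 < r.2)) i)) :=
        final.symm
    _ = F (fun j => F (fun i => M i j)) := by
        refine congrArg F (funext fun i => congrArg F (funext fun j => ?_))
        exact eT i j

lemma ub_symm (hn : 2 ≤ n) (hQ : Quasitrivial F) (hU : UltraBisymm F) : Symm F := by
  have hconst : ∀ c : X, F (fun _ => c) = c := qt_const hQ
  have hswap : ∀ (x : Fin n → X) (u v : Fin n), u ≠ v → F (x ∘ Equiv.swap u v) = F x := by
    intro x u v huv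
    set Mk : ℕ → (Fin n → Fin n → X) := fun k => fun i j =>
      if (i : ℕ) < k then x (Equiv.swap u v j) else x j with hMk
    have step : ∀ k, (hk : k < n) → F (fun i => F (Mk (k+1) i)) = F (fun i => F (Mk k i)) := by
      intro k hk
      have eqm : Mk (k+1) = applySwapST ((⟨k, hk⟩ : Fin n), u) ((⟨k, hk⟩ : Fin n), v) (Mk k) := by
        funext i j
        simp only [hMk, applySwapST]
        by_cases hik : i = (⟨k, hk⟩ : Fin n)
        · have hikv : (i : ℕ) = k := by rw [hik]
          by_cases hju : j = u
          · have c1 : (i, j) = ((⟨k, hk⟩ : Fin n), u) := by rw [hik, hju]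
            rw [if_pos c1, if_pos (show (i:ℕ) < k + 1 by omega),
              if_neg (Nat.lt_irrefl k), hju, Equiv.swap_apply_left]
          · have c1 : (i, j) ≠ ((⟨k, hk⟩ : Fin n), u) := fun hc => hju (congrArg Prod.snd hc)
            rw [if_neg c1]
            by_cases hjv : j = v
            · have c2 : (i, j) = ((⟨k, hk⟩ : Fin n), v) := by rw [hik, hjv]
              rw [if_pos c2, if_pos (show (i:ℕ) < k + 1 by omega),
                if_neg (Nat.lt_irrefl k), hjv, Equiv.swap_apply_right]
            · have c2 : (i, j) ≠ ((⟨k, hk⟩ : Fin n), v) := fun hc => hjv (congrArg Prod.snd hc)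
              rw [if_neg c2, if_pos (show (i:ℕ) < k + 1 by omega),
                if_neg (show ¬ ((i:ℕ) < k) by omega),
                Equiv.swap_apply_of_ne_of_ne hju hjv]
        · have c1 : (i, j) ≠ ((⟨k, hk⟩ : Fin n), u) := fun hc => hik (congrArg Prod.fst hc)
          have c2 : (i, j) ≠ ((⟨k, hk⟩ : Fin n), v) := fun hc => hik (congrArg Prod.fst hc)
          rw [if_neg c1, if_neg c2]
          have hne : (i : ℕ) ≠ k := fun hc => hik (Fin.ext hc)
          by_cases c4 : (i:ℕ) < k
          · rw [if_pos (show (i:ℕ) < k + 1 by omega), if_pos c4]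
          · rw [if_neg (show ¬ ((i:ℕ) < k + 1) by omega), if_neg c4]
      rw [eqm]
      exact ub_swap hU _ _ _
    have chain : ∀ k, k ≤ n → F (fun i => F (Mk k i)) = F (fun i => F (Mk 0 i)) := by
      intro k
      induction k with
      | zero => intro _; rfl
      | succ k IH =>
        intro hk
        rw [step k (by omega), IH (by omega)]
    have h0 : F (fun i => F (Mk 0 i)) = F x := by
      calc F (fun i => F (Mk 0 i)) = F (fun _ => F x) := by
            refine congrArg F (funext fun i => congrArg F (funext fun j => ?_))
            simp [hMk]
        _ = F x := hconst _
    have hN : F (fun i => F (Mk n i)) = F (x ∘ Equiv.swap u v) := by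
      calc F (fun i => F (Mk n i)) = F (fun _ => F (x ∘ Equiv.swap u v)) := by
            refine congrArg F (funext fun i => congrArg F (funext fun j => ?_))
            simp only [hMk, if_pos j.2, if_pos i.2]
            rfl
        _ = F (x ∘ Equiv.swap u v) := hconst _
    rw [← hN, chain n le_rfl, h0]
  have main : ∀ σ : Equiv.Perm (Fin n), ∀ x : Fin n → X, F (x ∘ σ) = F x := by
    intro σ
    refine Equiv.Perm.swap_induction_on σ ?_ ?_
    · intro x
      exact congrArg F (funext fun j => rfl)
    · intro f u v huv IH x
      have e1 : x ∘ ⇑(Equiv.swap u v * f) = (x ∘ Equiv.swap u v) ∘ f := by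
        funext t
        simp [Equiv.Perm.mul_apply]
      rw [e1, IH (x ∘ Equiv.swap u v), hswap x u v huv]
  intro x σ
  exact main σ x

end AuxST18D

section AuxST18E
variable {X : Type*} {n : ℕ} {F : (Fin n → X) → X}

def wvST (F : (Fin n → X) → X) (a b : X) (j : ℕ) : X :=
  F (fun i : Fin n => if (i : ℕ) < n - j then a else b)

lemma wv_zero (hn : 2 ≤ n) (hQ : Quasitrivial F) (a b : X) : wvST F a b 0 = a := by
  unfold wvST
  calc F (fun i : Fin n => if (i:ℕ) < n - 0 then a else b) = F (fun _ => a) := by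
        refine congrArg F (funext fun i => ?_)
        rw [if_pos (by have := i.2; omega)]
    _ = a := qt_const hQ a

lemma wv_n (hQ : Quasitrivial F) (a b : X) : wvST F a b n = b := by
  unfold wvST
  calc F (fun i : Fin n => if (i:ℕ) < n - n then a else b) = F (fun _ => b) := by
        refine congrArg F (funext fun i => ?_)
        rw [if_neg (by omega)]
    _ = b := qt_const hQ b

lemma wv_mem (hQ : Quasitrivial F) (a b : X) (j : ℕ) : wvST F a b j = a ∨ wvST F a b j = b := by
  unfold wvST
  obtain ⟨i, h⟩ := hQ (fun i : Fin n => if (i : ℕ) < n - j then a else b)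
  by_cases hc : (i : ℕ) < n - j
  · left; rw [h, if_pos hc]
  · right; rw [h, if_neg hc]

lemma jumpST {a b : X} (w : ℕ → X) (h0 : w 0 = a) (hmem : ∀ i, w i = a ∨ w i = b) :
    ∀ m, w (m+1) = b → ∃ k, k ≤ m ∧ w k = a ∧ w (k+1) = b := by
  intro m
  induction m with
  | zero => intro h1; exact ⟨0, le_rfl, h0, h1⟩
  | succ m IH =>
    intro h1
    rcases hmem (m+1) with ha | hb
    · exact ⟨m+1, le_rfl, ha, h1⟩
    · obtain ⟨k, hk, h2, h3⟩ := IH hb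
      exact ⟨k, by omega, h2, h3⟩

lemma jlemma (hQ : Quasitrivial F) (hB : Bisymm F) (p q : X) (c e t : ℕ → X) :
    F (fun j : Fin n => if (j:ℕ) = 0 then F (fun k : Fin n => if (k:ℕ) = 0 then p else c (k:ℕ))
        else if (j:ℕ) = 1 then F (fun k : Fin n => if (k:ℕ) = 0 then q else e (k:ℕ))
        else t (j:ℕ))
    = F (fun k : Fin n => if (k:ℕ) = 0 then
          F (fun i : Fin n => if (i:ℕ) = 0 then p else if (i:ℕ) = 1 then q else t (i:ℕ))
        else F (fun i : Fin n => if (i:ℕ) = 0 then c (k:ℕ)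
            else if (i:ℕ) = 1 then e (k:ℕ) else t (i:ℕ))) := by
  have hb := hB (fun i j : Fin n =>
    if (i:ℕ) = 0 then (if (j:ℕ) = 0 then p else c (j:ℕ))
    else if (i:ℕ) = 1 then (if (j:ℕ) = 0 then q else e (j:ℕ))
    else t (i:ℕ))
  have lhs_eq : F (fun j : Fin n => if (j:ℕ) = 0 then F (fun k : Fin n => if (k:ℕ) = 0 then p else c (k:ℕ))
        else if (j:ℕ) = 1 then F (fun k : Fin n => if (k:ℕ) = 0 then q else e (k:ℕ))
        else t (j:ℕ))
      = F (fun i : Fin n => F (fun j : Fin n =>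
          if (i:ℕ) = 0 then (if (j:ℕ) = 0 then p else c (j:ℕ))
          else if (i:ℕ) = 1 then (if (j:ℕ) = 0 then q else e (j:ℕ))
          else t (i:ℕ))) := by
    refine congrArg F (funext fun i => ?_)
    by_cases h0 : (i : ℕ) = 0
    · simp [h0]
    · by_cases h1 : (i : ℕ) = 1
      · simp [h0, h1]
      · simp only [h0, h1, if_false]
        exact (qt_const hQ _).symm
  have rhs_eq : F (fun j : Fin n => F (fun i : Fin n =>
          if (i:ℕ) = 0 then (if (j:ℕ) = 0 then p else c (j:ℕ))
          else if (i:ℕ) = 1 then (if (j:ℕ) = 0 then q else e (j:ℕ))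
          else t (i:ℕ)))
      = F (fun k : Fin n => if (k:ℕ) = 0 then
          F (fun i : Fin n => if (i:ℕ) = 0 then p else if (i:ℕ) = 1 then q else t (i:ℕ))
        else F (fun i : Fin n => if (i:ℕ) = 0 then c (k:ℕ)
            else if (i:ℕ) = 1 then e (k:ℕ) else t (i:ℕ))) := by
    refine congrArg F (funext fun k => ?_)
    by_cases h0 : (k : ℕ) = 0
    · simp [h0]
    · simp [h0]
  rw [lhs_eq, hb, rhs_eq]

lemma linkST (hn : 2 ≤ n) (hQ : Quasitrivial F) (hS : Symm F) (hB : Bisymm F)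
    (a b : X) (c t : ℕ → X) :
    ∀ j, j ≤ n - 1 →
    F (fun jj : Fin n => if (jj:ℕ) = 0 then F (fun k : Fin n => if (k:ℕ) = 0 then b else c (k:ℕ))
        else if (jj:ℕ) = 1 then wvST F a b j else t (jj:ℕ))
    = F (fun jj : Fin n => if (jj:ℕ) = 0 then F (fun k : Fin n => if (k:ℕ) = 0 then a else c (k:ℕ))
        else if (jj:ℕ) = 1 then wvST F a b (j+1) else t (jj:ℕ)) := by
  intro j hj
  have hjb := jlemma hQ hB b a c (fun k => if k < n - j then a else b) t
  have hja := jlemma hQ hB a b c (fun k => if k < n - j then a else b) t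
  have ewb : F (fun k : Fin n => if (k:ℕ) = 0 then a else if (k:ℕ) < n - j then a else b)
      = wvST F a b j := by
    unfold wvST
    refine congrArg F (funext fun k => ?_)
    by_cases h0 : (k : ℕ) = 0
    · rw [if_pos h0, h0, if_pos (by omega)]
    · rw [if_neg h0]
  have ewa : F (fun k : Fin n => if (k:ℕ) = 0 then b else if (k:ℕ) < n - j then a else b)
      = wvST F a b (j+1) := by
    unfold wvST
    by_cases hjn : j + 1 = n
    · refine congrArg F (funext fun k => ?_)
      have hk := k.2
      by_cases h0 : (k:ℕ) = 0
      · rw [if_pos h0, if_neg (by omega)]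
      · rw [if_neg h0, if_neg (by omega), if_neg (by omega)]
    · have hd : 1 ≤ n - (j+1) := by omega
      calc F (fun k : Fin n => if (k:ℕ) = 0 then b else if (k:ℕ) < n - j then a else b)
          = F (fun k : Fin n => (fun u => if u < n - (j+1) then a else b)
              (mySwapST 0 (n-(j+1)) (k:ℕ))) := by
            refine congrArg F (funext fun k => ?_)
            have hk := k.2
            dsimp only
            by_cases h0 : (k:ℕ) = 0
            · rw [if_pos h0]
              have hsw : mySwapST 0 (n-(j+1)) (k:ℕ) = n-(j+1) := by
                unfold mySwapST; rw [if_pos h0]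
              rw [hsw, if_neg (by omega)]
            · rw [if_neg h0]
              by_cases hkd : (k:ℕ) = n-(j+1)
              · have hsw : mySwapST 0 (n-(j+1)) (k:ℕ) = 0 := by
                  unfold mySwapST; rw [if_neg h0, if_pos hkd]
                rw [hsw, if_pos (by omega), if_pos (by omega)]
              · have hsw : mySwapST 0 (n-(j+1)) (k:ℕ) = (k:ℕ) := by
                  unfold mySwapST; rw [if_neg h0, if_neg hkd]
                rw [hsw]
                by_cases hlt : (k:ℕ) < n-(j+1)
                · rw [if_pos (by omega), if_pos hlt]
                · rw [if_neg (by omega), if_neg hlt]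
        _ = F (fun k : Fin n => if (k:ℕ) < n - (j+1) then a else b) := by
            exact FS hS (fun u => if u < n - (j+1) then a else b)
              (mySwapST 0 (n-(j+1))) (mySwapST 0 (n-(j+1)))
              (fun t ht => mySwap_lt (by omega) (by omega) ht)
              (fun t ht => mySwap_lt (by omega) (by omega) ht)
              (fun t ht => mySwap_invol _ _ _) (fun t ht => mySwap_invol _ _ _)
  have esw : F (fun i : Fin n => if (i:ℕ) = 0 then b else if (i:ℕ) = 1 then a else t (i:ℕ))
      = F (fun i : Fin n => if (i:ℕ) = 0 then a else if (i:ℕ) = 1 then b else t (i:ℕ)) := by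
    calc F (fun i : Fin n => if (i:ℕ) = 0 then b else if (i:ℕ) = 1 then a else t (i:ℕ))
        = F (fun i : Fin n => (fun u => if u = 0 then a else if u = 1 then b else t u)
            (mySwapST 0 1 (i:ℕ))) := by
          refine congrArg F (funext fun i => ?_)
          by_cases h0 : (i:ℕ) = 0
          · simp [mySwapST, h0]
          · by_cases h1 : (i:ℕ) = 1
            · simp [mySwapST, h0, h1]
            · simp [mySwapST, h0, h1]
      _ = F (fun i : Fin n => if (i:ℕ) = 0 then a else if (i:ℕ) = 1 then b else t (i:ℕ)) := by
          exact FS hS (fun u => if u = 0 then a else if u = 1 then b else t u)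
            (mySwapST 0 1) (mySwapST 0 1)
            (fun t ht => mySwap_lt (by omega) (by omega) ht)
            (fun t ht => mySwap_lt (by omega) (by omega) ht)
            (fun t ht => mySwap_invol _ _ _) (fun t ht => mySwap_invol _ _ _)
  rw [ewb, esw] at hjb
  rw [ewa] at hja
  exact hjb.trans hja.symm

lemma exchST (hn : 2 ≤ n) (hQ : Quasitrivial F) (hS : Symm F) (hB : Bisymm F)
    (a b : X) (c t : ℕ → X) :
    F (fun j : Fin n => if (j:ℕ) = 0 then F (fun k : Fin n => if (k:ℕ) = 0 then a else c (k:ℕ))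
        else if (j:ℕ) = 1 then b else t (j:ℕ))
    = F (fun j : Fin n => if (j:ℕ) = 0 then F (fun k : Fin n => if (k:ℕ) = 0 then b else c (k:ℕ))
        else if (j:ℕ) = 1 then a else t (j:ℕ)) := by
  obtain ⟨k, hk, e1, e2⟩ := jumpST (wvST F a b) (wv_zero hn hQ a b) (wv_mem hQ a b) (n-1)
    (by rw [show n-1+1 = n from by omega]; exact wv_n hQ a b)
  have hL : F (fun j : Fin n => if (j:ℕ) = 0 then F (fun k : Fin n => if (k:ℕ) = 0 then a else c (k:ℕ))
        else if (j:ℕ) = 1 then b else t (j:ℕ))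
      = F (fun jj : Fin n => if (jj:ℕ) = 0 then F (fun k : Fin n => if (k:ℕ) = 0 then a else c (k:ℕ))
        else if (jj:ℕ) = 1 then wvST F a b n else t (jj:ℕ)) := by
    refine congrArg F (funext fun jj => ?_)
    by_cases h0 : (jj:ℕ) = 0
    · rw [if_pos h0, if_pos h0]
    · rw [if_neg h0, if_neg h0]
      by_cases h1 : (jj:ℕ) = 1
      · rw [if_pos h1, if_pos h1, wv_n hQ a b]
      · rw [if_neg h1, if_neg h1]
  have hR : F (fun j : Fin n => if (j:ℕ) = 0 then F (fun k : Fin n => if (k:ℕ) = 0 then b else c (k:ℕ))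
        else if (j:ℕ) = 1 then a else t (j:ℕ))
      = F (fun jj : Fin n => if (jj:ℕ) = 0 then F (fun k : Fin n => if (k:ℕ) = 0 then b else c (k:ℕ))
        else if (jj:ℕ) = 1 then wvST F a b k else t (jj:ℕ)) := by
    refine congrArg F (funext fun jj => ?_)
    by_cases h0 : (jj:ℕ) = 0
    · rw [if_pos h0, if_pos h0]
    · rw [if_neg h0, if_neg h0]
      by_cases h1 : (jj:ℕ) = 1
      · rw [if_pos h1, if_pos h1, e1]
      · rw [if_neg h1, if_neg h1]
  have hMn : F (fun jj : Fin n => if (jj:ℕ) = 0 then F (fun k : Fin n => if (k:ℕ) = 0 then a else c (k:ℕ))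
        else if (jj:ℕ) = 1 then wvST F a b (k+1) else t (jj:ℕ))
      = F (fun jj : Fin n => if (jj:ℕ) = 0 then F (fun k : Fin n => if (k:ℕ) = 0 then a else c (k:ℕ))
        else if (jj:ℕ) = 1 then wvST F a b n else t (jj:ℕ)) := by
    refine congrArg F (funext fun jj => ?_)
    by_cases h0 : (jj:ℕ) = 0
    · rw [if_pos h0, if_pos h0]
    · rw [if_neg h0, if_neg h0]
      by_cases h1 : (jj:ℕ) = 1
      · rw [if_pos h1, if_pos h1, e2, wv_n hQ a b]
      · rw [if_neg h1, if_neg h1]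
  rw [hL, hR, ← hMn, ← linkST hn hQ hS hB a b c t k hk]

lemma bisymm_nassoc (hn : 2 ≤ n) (hQ : Quasitrivial F) (hS : Symm F) (hB : Bisymm F) :
    NAssoc n F := by
  intro x i hi
  have key := exchST hn hQ hS hB (x i) (x (i+n)) (fun u => x (i+u))
    (fun u => if u < i + 2 then x (u - 2) else x (u + n - 1))
  have hL : F (fun j : Fin n => if (j : ℕ) < i then x (j:ℕ)
        else if (j : ℕ) = i then F (fun k : Fin n => x (i + (k:ℕ))) else x ((j:ℕ) + n - 1))
      = F (fun j : Fin n => if (j:ℕ) = 0 then F (fun k : Fin n => if (k:ℕ) = 0 then x i else x (i + (k:ℕ)))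
        else if (j:ℕ) = 1 then x (i+n)
        else if (j:ℕ) < i + 2 then x ((j:ℕ) - 2) else x ((j:ℕ) + n - 1)) := by
    calc F (fun j : Fin n => if (j : ℕ) < i then x (j:ℕ)
          else if (j : ℕ) = i then F (fun k : Fin n => x (i + (k:ℕ))) else x ((j:ℕ) + n - 1))
        = F (fun j : Fin n => (fun u => if u = 0 then F (fun k : Fin n => if (k:ℕ) = 0 then x i else x (i + (k:ℕ)))
            else if u = 1 then x (i+n)
            else if u < i + 2 then x (u - 2) else x (u + n - 1))
            ((fun v => if v = i then 0 else if v = i+1 then 1 else if v < i then v+2 else v) (j:ℕ))) := by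
          refine congrArg F (funext fun j => ?_)
          have hj2 := j.2
          dsimp only
          rcases lt_trichotomy ((j:ℕ)) i with hji | hji | hji
          · have hf : (if (j:ℕ) = i then 0 else if (j:ℕ) = i+1 then 1
                else if (j:ℕ) < i then (j:ℕ)+2 else (j:ℕ)) = (j:ℕ)+2 := by
              rw [if_neg (show ¬((j:ℕ) = i) by omega), if_neg (show ¬((j:ℕ) = i+1) by omega),
                if_pos hji]
            rw [hf, if_pos hji, if_neg (show ¬((j:ℕ)+2 = 0) by omega),
              if_neg (show ¬((j:ℕ)+2 = 1) by omega), if_pos (show (j:ℕ)+2 < i+2 by omega)]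
            congr 1 <;> omega
          · have hf : (if (j:ℕ) = i then 0 else if (j:ℕ) = i+1 then 1
                else if (j:ℕ) < i then (j:ℕ)+2 else (j:ℕ)) = 0 := if_pos hji
            rw [hf, if_neg (show ¬((j:ℕ) < i) by omega), if_pos hji, if_pos rfl]
            refine congrArg F (funext fun k => ?_)
            by_cases hk0 : (k:ℕ) = 0
            · rw [if_pos hk0, hk0]
              congr 1 <;> omega
            · rw [if_neg hk0]
          · by_cases hji1 : (j:ℕ) = i + 1
            · have hf : (if (j:ℕ) = i then 0 else if (j:ℕ) = i+1 then 1
                  else if (j:ℕ) < i then (j:ℕ)+2 else (j:ℕ)) = 1 := by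
                rw [if_neg (show ¬((j:ℕ) = i) by omega), if_pos hji1]
              rw [hf, if_neg (show ¬((j:ℕ) < i) by omega), if_neg (show ¬((j:ℕ) = i) by omega),
                if_neg (show ¬((1:ℕ) = 0) by omega), if_pos rfl]
              congr 1 <;> omega
            · have hf : (if (j:ℕ) = i then 0 else if (j:ℕ) = i+1 then 1
                  else if (j:ℕ) < i then (j:ℕ)+2 else (j:ℕ)) = (j:ℕ) := by
                rw [if_neg (show ¬((j:ℕ) = i) by omega), if_neg (show ¬((j:ℕ) = i+1) by omega),
                  if_neg (show ¬((j:ℕ) < i) by omega)]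
              rw [hf, if_neg (show ¬((j:ℕ) < i) by omega), if_neg (show ¬((j:ℕ) = i) by omega),
                if_neg (show ¬((j:ℕ) = 0) by omega), if_neg (show ¬((j:ℕ) = 1) by omega),
                if_neg (show ¬((j:ℕ) < i + 2) by omega)]
      _ = F (fun j : Fin n => (fun u => if u = 0 then F (fun k : Fin n => if (k:ℕ) = 0 then x i else x (i + (k:ℕ)))
            else if u = 1 then x (i+n)
            else if u < i + 2 then x (u - 2) else x (u + n - 1)) (j:ℕ)) := by
          refine FS hS (fun u => if u = 0 then F (fun k : Fin n => if (k:ℕ) = 0 then x i else x (i + (k:ℕ)))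
              else if u = 1 then x (i+n)
              else if u < i + 2 then x (u - 2) else x (u + n - 1))
            (fun v => if v = i then 0 else if v = i+1 then 1 else if v < i then v+2 else v)
            (fun v => if v = 0 then i else if v = 1 then i+1 else if v < i+2 then v-2 else v)
            ?_ ?_ ?_ ?_
          · intro t ht; split_ifs <;> omega
          · intro t ht; split_ifs <;> omega
          · intro t ht
            by_cases h1 : t = i <;> by_cases h2 : t = i + 1 <;> by_cases h3 : t < i <;>
              simp [h1, h2, h3] <;> first | omega | (split_ifs <;> omega)
          · intro t ht
            by_cases h1 : t = 0 <;> by_cases h2 : t = 1 <;> by_cases h3 : t < i + 2 <;>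
              simp [h1, h2, h3] <;> first | omega | (split_ifs <;> omega)
  have hR : F (fun j : Fin n => if (j : ℕ) < i + 1 then x (j:ℕ)
        else if (j : ℕ) = i + 1 then F (fun k : Fin n => x (i + 1 + (k:ℕ))) else x ((j:ℕ) + n - 1))
      = F (fun j : Fin n => if (j:ℕ) = 0 then F (fun k : Fin n => if (k:ℕ) = 0 then x (i+n) else x (i + (k:ℕ)))
        else if (j:ℕ) = 1 then x i
        else if (j:ℕ) < i + 2 then x ((j:ℕ) - 2) else x ((j:ℕ) + n - 1)) := by
    have hblk : F (fun k : Fin n => if (k:ℕ) = 0 then x (i+n) else x (i + (k:ℕ)))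
        = F (fun k : Fin n => x (i + 1 + (k:ℕ))) := by
      calc F (fun k : Fin n => if (k:ℕ) = 0 then x (i+n) else x (i + (k:ℕ)))
          = F (fun k : Fin n => (fun u => x (i + 1 + u))
              ((fun v => if v = 0 then n - 1 else v - 1) (k:ℕ))) := by
            refine congrArg F (funext fun k => ?_)
            have hk2 := k.2
            dsimp only
            by_cases hk0 : (k:ℕ) = 0
            · rw [if_pos hk0, if_pos hk0]
              congr 1 <;> omega
            · rw [if_neg hk0, if_neg hk0]
              congr 1 <;> omega
    
        _ = F (fun k : Fin n => (fun u => x (i + 1 + u)) (k:ℕ)) := by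
            refine FS hS (fun u => x (i + 1 + u)) (fun v => if v = 0 then n - 1 else v - 1)
              (fun v => if v = n - 1 then 0 else v + 1) ?_ ?_ ?_ ?_
            · intro t ht; split_ifs <;> omega
            · intro t ht; split_ifs <;> omega
            · intro t ht
              by_cases h1 : t = 0 <;> simp [h1] <;> first | omega | (split_ifs <;> omega)
            · intro t ht
              by_cases h1 : t = n - 1 <;> simp [h1] <;> first | omega | (split_ifs <;> omega)
    calc F (fun j : Fin n => if (j : ℕ) < i + 1 then x (j:ℕ)
          else if (j : ℕ) = i + 1 then F (fun k : Fin n => x (i + 1 + (k:ℕ))) else x ((j:ℕ) + n - 1))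
        = F (fun j : Fin n => (fun u => if u = 0 then F (fun k : Fin n => x (i + 1 + (k:ℕ)))
            else if u = 1 then x i
            else if u < i + 2 then x (u - 2) else x (u + n - 1))
            ((fun v => if v = i+1 then 0 else if v = i then 1 else if v < i then v+2 else v) (j:ℕ))) := by
          refine congrArg F (funext fun j => ?_)
          have hj2 := j.2
          dsimp only
          rcases lt_trichotomy ((j:ℕ)) i with hji | hji | hji
          · have hf : (if (j:ℕ) = i+1 then 0 else if (j:ℕ) = i then 1
                else if (j:ℕ) < i then (j:ℕ)+2 else (j:ℕ)) = (j:ℕ)+2 := by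
              rw [if_neg (show ¬((j:ℕ) = i+1) by omega), if_neg (show ¬((j:ℕ) = i) by omega),
                if_pos hji]
            rw [hf, if_pos (show (j:ℕ) < i+1 by omega), if_neg (show ¬((j:ℕ)+2 = 0) by omega),
              if_neg (show ¬((j:ℕ)+2 = 1) by omega), if_pos (show (j:ℕ)+2 < i+2 by omega)]
            congr 1 <;> omega
          · have hf : (if (j:ℕ) = i+1 then 0 else if (j:ℕ) = i then 1
                else if (j:ℕ) < i then (j:ℕ)+2 else (j:ℕ)) = 1 := by
              rw [if_neg (show ¬((j:ℕ) = i+1) by omega), if_pos hji]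
            rw [hf, if_pos (show (j:ℕ) < i+1 by omega), if_neg (show ¬((1:ℕ) = 0) by omega),
              if_pos rfl]
            congr 1 <;> omega
          · by_cases hji1 : (j:ℕ) = i + 1
            · have hf : (if (j:ℕ) = i+1 then 0 else if (j:ℕ) = i then 1
                  else if (j:ℕ) < i then (j:ℕ)+2 else (j:ℕ)) = 0 := if_pos hji1
              rw [hf, if_neg (show ¬((j:ℕ) < i+1) by omega), if_pos hji1, if_pos rfl]
            · have hf : (if (j:ℕ) = i+1 then 0 else if (j:ℕ) = i then 1
                  else if (j:ℕ) < i then (j:ℕ)+2 else (j:ℕ)) = (j:ℕ) := by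
                rw [if_neg hji1, if_neg (show ¬((j:ℕ) = i) by omega),
                  if_neg (show ¬((j:ℕ) < i) by omega)]
              rw [hf, if_neg (show ¬((j:ℕ) < i+1) by omega), if_neg hji1,
                if_neg (show ¬((j:ℕ) = 0) by omega), if_neg (show ¬((j:ℕ) = 1) by omega),
                if_neg (show ¬((j:ℕ) < i + 2) by omega)]
      _ = F (fun j : Fin n => (fun u => if u = 0 then F (fun k : Fin n => x (i + 1 + (k:ℕ)))
            else if u = 1 then x i
            else if u < i + 2 then x (u - 2) else x (u + n - 1)) (j:ℕ)) := by
          refine FS hS (fun u => if u = 0 then F (fun k : Fin n => x (i + 1 + (k:ℕ)))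
              else if u = 1 then x i
              else if u < i + 2 then x (u - 2) else x (u + n - 1))
            (fun v => if v = i+1 then 0 else if v = i then 1 else if v < i then v+2 else v)
            (fun v => if v = 0 then i+1 else if v = 1 then i else if v < i+2 then v-2 else v)
            ?_ ?_ ?_ ?_
          · intro t ht; split_ifs <;> omega
          · intro t ht; split_ifs <;> omega
          · intro t ht
            by_cases h1 : t = i + 1 <;> by_cases h2 : t = i <;> by_cases h3 : t < i <;>
              simp [h1, h2, h3] <;> first | omega | (split_ifs <;> omega)
          · intro t ht
            by_cases h1 : t = 0 <;> by_cases h2 : t = 1 <;> by_cases h3 : t < i + 2 <;>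
              simp [h1, h2, h3] <;> first | omega | (split_ifs <;> omega)
      _ = F (fun j : Fin n => if (j:ℕ) = 0 then F (fun k : Fin n => if (k:ℕ) = 0 then x (i+n) else x (i + (k:ℕ)))
            else if (j:ℕ) = 1 then x i
            else if (j:ℕ) < i + 2 then x ((j:ℕ) - 2) else x ((j:ℕ) + n - 1)) := by
          refine congrArg F (funext fun j => ?_)
          dsimp only
          by_cases h0 : (j:ℕ) = 0
          · rw [if_pos h0, if_pos h0, hblk]
          · rw [if_neg h0, if_neg h0]
  exact hL.trans (key.trans hR.symm)

end AuxST18E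

theorem stmt_18 {X : Type*} {n : ℕ} (hn : 2 ≤ n) (F : (Fin n → X) → X) :
    (NAssoc n F → Symm F → UltraBisymm F) ∧
    (Quasitrivial F → (NAssoc n F ∧ Symm F ↔ UltraBisymm F)) ∧
    (Quasitrivial F → Symm F → (NAssoc n F ↔ Bisymm F)) := by
  refine ⟨fun hA hS => part1ST hn hA hS, ?_, ?_⟩
  · intro hQ
    constructor
    · rintro ⟨hA, hS⟩
      exact part1ST hn hA hS
    · intro hU
      have hS := ub_symm hn hQ hU
      exact ⟨bisymm_nassoc hn hQ hS (ub_bisymm hU), hS⟩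
  · intro hQ hS
    exact ⟨fun hA => ub_bisymm (part1ST hn hA hS), fun hB => bisymm_nassoc hn hQ hS hB⟩
end

section
/- If F : X^n → X is bisymmetric and has a neutral element, then F is associative and symmetric. -/
section StmtAux

variable {X : Type*}

private lemma stmt19_symm {n : ℕ} (F : (Fin n → X) → X) (hb : Bisymm F) {e : X}
    (he : Neutral F e) : Symm F := by
  intro x σ
  have hrow : ∀ i, F (fun j => if j = σ i then x (σ i) else e) = x (σ i) := by
    intro i
    have : (fun j => if j = σ i then x (σ i) else e)
        = Function.update (fun _ => e) (σ i) (x (σ i)) := by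
      funext j; simp [Function.update_apply]
    rw [this]; exact he _ _
  have hcol : ∀ j, F (fun i => if j = σ i then x (σ i) else e) = x j := by
    intro j
    have : (fun i => if j = σ i then x (σ i) else e)
        = Function.update (fun _ => e) (σ.symm j) (x j) := by
      funext i
      rcases eq_or_ne i (σ.symm j) with h | h
      · subst h; simp
      · have hne : j ≠ σ i := by
          intro hj; exact h (by rw [hj, Equiv.symm_apply_apply])
        rw [if_neg (fun hc => hne hc), Function.update_of_ne h]
    rw [this]; exact he _ _
  calc F (x ∘ σ)
      = F (fun i => F (fun j => if j = σ i then x (σ i) else e)) := by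
        congr 1; funext i; exact (hrow i).symm
    _ = F (fun j => F (fun i => if j = σ i then x (σ i) else e)) :=
        hb (fun i j => if j = σ i then x (σ i) else e)
    _ = F x := by congr 1; funext j; exact hcol j

private lemma stmt19_star {m : ℕ} (F : (Fin (m + 2) → X) → X) (hb : Bisymm F) {e : X}
    (he : Neutral F e) (u v : Fin (m + 2) → X) :
    F (Function.update v 0 (F u))
      = F (Function.update u 0 (F (Function.update v 0 (u 0)))) := by
  have hrow : ∀ i, F (fun j => if i = 0 then u j else if j = 0 then v i else e)
      = Function.update v 0 (F u) i := by
    intro i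
    rcases eq_or_ne i 0 with h | h
    · subst h; simp
    · rw [Function.update_of_ne h]
      have : (fun j : Fin (m + 2) => if i = 0 then u j else if j = 0 then v i else e)
          = Function.update (fun _ => e) 0 (v i) := by
        funext j; simp [Function.update_apply, h]
      rw [this]; exact he _ _
  have hcol : ∀ j, F (fun i => if i = 0 then u j else if j = 0 then v i else e)
      = Function.update u 0 (F (Function.update v 0 (u 0))) j := by
    intro j
    rcases eq_or_ne j 0 with h | h
    · subst h
      rw [Function.update_self]
      congr 1
      funext i
      simp [Function.update_apply]
    · rw [Function.update_of_ne h]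
      have : (fun i : Fin (m + 2) => if i = 0 then u j else if j = 0 then v i else e)
          = Function.update (fun _ => e) 0 (u j) := by
        funext i; simp [Function.update_apply, h]
      rw [this]; exact he _ _
  calc F (Function.update v 0 (F u))
      = F (fun i => F (fun j => if i = 0 then u j else if j = 0 then v i else e)) := by
        congr 1; funext i; exact (hrow i).symm
    _ = F (fun j => F (fun i => if i = 0 then u j else if j = 0 then v i else e)) :=
        hb _
    _ = F (Function.update u 0 (F (Function.update v 0 (u 0)))) := by
        congr 1; funext j; exact hcol j

private lemma stmt19_exch0 {m : ℕ} (F : (Fin (m + 2) → X) → X) (hb : Bisymm F) {e : X}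
    (he : Neutral F e) (hs : Symm F) (u v : Fin (m + 2) → X) (q : Fin (m + 2))
    (hq : q ≠ 0) :
    F (Function.update v 0 (F u))
      = F (Function.update (Function.update v q (u 0)) 0
            (F (Function.update u 0 (v q)))) := by
  rw [stmt19_star F hb he u v,
      stmt19_star F hb he (Function.update u 0 (v q)) (Function.update v q (u 0))]
  have hw : Function.update v 0 (u 0) ∘ (Equiv.swap 0 q)
      = Function.update (Function.update v q (u 0)) 0 (v q) := by
    funext j
    simp only [Function.comp_apply, Equiv.swap_apply_def, Function.update_apply]
    split_ifs <;> simp_all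
  congr 1
  funext j
  rcases eq_or_ne j 0 with h | h
  · subst h
    rw [Function.update_self, Function.update_self, Function.update_self, ← hw]
    exact (hs _ _).symm
  · rw [Function.update_of_ne h, Function.update_of_ne h, Function.update_of_ne h]

private lemma stmt19_exch {m : ℕ} (F : (Fin (m + 2) → X) → X) (hb : Bisymm F) {e : X}
    (he : Neutral F e) (hs : Symm F) (u v : Fin (m + 2) → X) (p q : Fin (m + 2))
    (hpq : p ≠ q) (r : Fin (m + 2)) :
    F (Function.update v p (F u))
      = F (Function.update (Function.update v q (u r)) p
            (F (Function.update u r (v q)))) := by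
  have hsp : (Equiv.swap (0 : Fin (m + 2)) p).symm p = 0 := by
    rw [Equiv.symm_swap, Equiv.swap_apply_right]
  have htr : (Equiv.swap (0 : Fin (m + 2)) r).symm r = 0 := by
    rw [Equiv.symm_swap, Equiv.swap_apply_right]
  have hq0 : Equiv.swap (0 : Fin (m + 2)) p q ≠ 0 := by
    intro h
    exact hpq ((Equiv.swap (0 : Fin (m + 2)) p).injective
      (h.trans (Equiv.swap_apply_right 0 p).symm)).symm
  calc F (Function.update v p (F u))
      = F (Function.update v p (F u) ∘ Equiv.swap 0 p) := (hs _ _).symm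
    _ = F (Function.update (v ∘ Equiv.swap 0 p) 0 (F (u ∘ Equiv.swap 0 r))) := by
        rw [Function.update_comp_equiv, hsp, hs u (Equiv.swap 0 r)]
    _ = F (Function.update
            (Function.update (v ∘ Equiv.swap 0 p) (Equiv.swap 0 p q)
              ((u ∘ Equiv.swap 0 r) 0)) 0
            (F (Function.update (u ∘ Equiv.swap 0 r) 0
              ((v ∘ Equiv.swap 0 p) (Equiv.swap 0 p q))))) :=
        stmt19_exch0 F hb he hs _ _ _ hq0
    _ = F (Function.update (Function.update v q (u r)) p
            (F (Function.update u r (v q)))) := by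
        have e1 : (u ∘ Equiv.swap 0 r) 0 = u r := by
          simp [Equiv.swap_apply_left]
        have e2 : (v ∘ Equiv.swap 0 p) (Equiv.swap 0 p q) = v q := by
          simp [Equiv.swap_apply_self]
        rw [e1, e2]
        have e3 : Function.update (u ∘ Equiv.swap 0 r) 0 (v q)
            = Function.update u r (v q) ∘ Equiv.swap 0 r := by
          rw [Function.update_comp_equiv, htr]
        have e4 : ∀ c : X, Function.update (Function.update (v ∘ Equiv.swap 0 p)
              (Equiv.swap 0 p q) (u r)) 0 c
            = Function.update (Function.update v q (u r)) p c ∘ Equiv.swap 0 p := by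
          intro c
          rw [Function.update_comp_equiv, Function.update_comp_equiv, hsp,
              Equiv.symm_swap]
        rw [e3, e4, hs, hs]

end StmtAux

theorem stmt_19 {X : Type*} {n : ℕ} (hn : 2 ≤ n) (F : (Fin n → X) → X)
    (hb : Bisymm F) (e : X) (he : Neutral F e) :
    NAssoc n F ∧ Symm F := by
  obtain ⟨m, rfl⟩ : ∃ m, n = m + 2 := ⟨n - 2, by omega⟩
  have hsym : Symm F := stmt19_symm F hb he
  refine ⟨?_, hsym⟩
  intro x i hi
  have hi1 : i < m + 2 := by omega
  have hi2 : i + 1 < m + 2 := by omega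
  set B1 : Fin (m + 2) → X := fun k : Fin (m + 2) => x (i + (k : ℕ)) with hB1
  set B2 : Fin (m + 2) → X := fun k : Fin (m + 2) => x (i + 1 + (k : ℕ)) with hB2
  set G1 : Fin (m + 2) → X :=
    fun j : Fin (m + 2) => if (j : ℕ) < i then x j else x (j + (m + 2) - 1) with hG1
  set G2 : Fin (m + 2) → X :=
    fun j : Fin (m + 2) => if (j : ℕ) < i + 1 then x j else x (j + (m + 2) - 1) with hG2
  have hne : (⟨i, hi1⟩ : Fin (m + 2)) ≠ ⟨i + 1, hi2⟩ :=
    Fin.ne_of_val_ne (show i ≠ i + 1 by omega)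
  have hL : (fun j : Fin (m + 2) => if (j : ℕ) < i then x j
        else if (j : ℕ) = i then F B1 else x (j + (m + 2) - 1))
      = Function.update G1 ⟨i, hi1⟩ (F B1) := by
    funext j
    rcases eq_or_ne j ⟨i, hi1⟩ with h | h
    · subst h
      rw [Function.update_self]
      show (if i < i then x i else if i = i then F B1 else x (i + (m + 2) - 1)) = F B1
      rw [if_neg (lt_irrefl i), if_pos rfl]
    · have hji : (j : ℕ) ≠ i := fun hc => h (Fin.ext hc)
      rw [Function.update_of_ne h]
      by_cases hlt : (j : ℕ) < i
      · simp [hG1, hlt]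
      · simp [hG1, hlt, hji]
  have hR : (fun j : Fin (m + 2) => if (j : ℕ) < i + 1 then x j
        else if (j : ℕ) = i + 1 then F B2 else x (j + (m + 2) - 1))
      = Function.update G2 ⟨i + 1, hi2⟩ (F B2) := by
    funext j
    rcases eq_or_ne j ⟨i + 1, hi2⟩ with h | h
    · subst h
      rw [Function.update_self]
      show (if i + 1 < i + 1 then x (i + 1)
        else if i + 1 = i + 1 then F B2 else x (i + 1 + (m + 2) - 1)) = F B2
      rw [if_neg (lt_irrefl (i + 1)), if_pos rfl]
    · have hji : (j : ℕ) ≠ i + 1 := fun hc => h (Fin.ext hc)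
      rw [Function.update_of_ne h]
      by_cases hlt : (j : ℕ) < i + 1
      · simp [hG2, hlt]; intro hc; omega
      · simp [hG2, hlt, hji]; intro hc; omega
  rw [hL, hR]
  rw [stmt19_exch F hb he hsym B1 G1 ⟨i, hi1⟩ ⟨i + 1, hi2⟩ hne 0]
  have hB10 : B1 0 = x i := by
    rw [hB1]
    show x (i + ((0 : Fin (m + 2)) : ℕ)) = x i
    rw [Fin.val_zero, Nat.add_zero]
  have hGq : G1 ⟨i + 1, hi2⟩ = x (i + 1 + (m + 2) - 1) := by
    rw [hG1]
    show (if i + 1 < i then x (i + 1) else x (i + 1 + (m + 2) - 1)) = _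
    rw [if_neg (by omega)]
  rw [hB10, hGq]
  have hinner : F (Function.update B1 0 (x (i + 1 + (m + 2) - 1))) = F B2 := by
    have hrot : ∀ k : Fin (m + 2),
        Function.update B1 0 (x (i + 1 + (m + 2) - 1)) (finRotate (m + 2) k) = B2 k := by
      intro k
      rcases eq_or_ne k (Fin.last (m + 1)) with h | h
      · subst h
        rw [finRotate_succ_apply, Fin.last_add_one, Function.update_self, hB2]
        show _ = x (i + 1 + ((Fin.last (m + 1) : Fin (m + 2)) : ℕ))
        rw [Fin.val_last]
        exact congrArg x (by omega)
      · have hlt : k < Fin.last (m + 1) := Fin.lt_last_iff_ne_last.mpr h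
        rw [finRotate_succ_apply]
        have hv : ((k + 1 : Fin (m + 2)) : ℕ) = (k : ℕ) + 1 := Fin.val_add_one_of_lt hlt
        have hne0 : (k + 1 : Fin (m + 2)) ≠ 0 := by
          intro h0
          rw [h0, Fin.val_zero] at hv
          exact (Nat.succ_ne_zero _) hv.symm
        rw [Function.update_of_ne hne0, hB1, hB2]
        show x (i + ((k + 1 : Fin (m + 2)) : ℕ)) = x (i + 1 + (k : ℕ))
        rw [hv]
        congr 1
        omega
    have hcomp : Function.update B1 0 (x (i + 1 + (m + 2) - 1))
        = B2 ∘ (finRotate (m + 2)).symm := by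
      funext j
      conv_lhs => rw [← Equiv.apply_symm_apply (finRotate (m + 2)) j]
      exact hrot _
    rw [hcomp]
    exact hsym B2 (finRotate (m + 2)).symm
  rw [hinner]
  have houter : ∀ c : X,
      Function.update G2 ⟨i + 1, hi2⟩ c ∘ (Equiv.swap ⟨i, hi1⟩ ⟨i + 1, hi2⟩)
        = Function.update (Function.update G1 ⟨i + 1, hi2⟩ (x i)) ⟨i, hi1⟩ c := by
    intro c
    funext j
    rcases eq_or_ne j ⟨i, hi1⟩ with h | h
    · subst h
      rw [Function.comp_apply, Equiv.swap_apply_left, Function.update_self,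
        Function.update_self]
    · rcases eq_or_ne j ⟨i + 1, hi2⟩ with h2 | h2
      · subst h2
        rw [Function.comp_apply, Equiv.swap_apply_right, Function.update_of_ne hne,
          Function.update_of_ne (Ne.symm hne), Function.update_self, hG2]
        show (if i < i + 1 then x i else x (i + (m + 2) - 1)) = x i
        rw [if_pos (by omega)]
      · have hsw : Equiv.swap (⟨i, hi1⟩ : Fin (m + 2)) ⟨i + 1, hi2⟩ j = j :=
          Equiv.swap_apply_of_ne_of_ne h h2
        rw [Function.comp_apply, hsw, Function.update_of_ne h2,
          Function.update_of_ne h, Function.update_of_ne h2]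
        have hji : (j : ℕ) ≠ i := fun hc => h (Fin.ext hc)
        by_cases hlt : (j : ℕ) < i
        · simp [hG1, hG2, hlt, (show (j : ℕ) < i + 1 by omega)]; intro hc; omega
        · simp [hG1, hG2, hlt, (show ¬ (j : ℕ) < i + 1 by omega)]; intro hc; omega
  rw [← houter (F B2)]
  exact hsym _ _
end
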